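/- Let q be a positive symmetric operad. The partial compositions □_s on the composite species NAP ∘ q, defined by (t ⊗ ⊗_{C∈π} γ_C) □_s (u ⊗ ⊗_{B∈ρ} β_B) = (t ∘_{C_s} u) ⊗ ⊗_{D} α_D, where α_D = γ_C for D = C ∈ π\{C_s}, α_D = β_B for D = B ∈ ρ\{B_root(u)}, and α_{C_s ⊔_s B_root(u)} = γ_{C_s} ∘_s β_{B_root(u)}, make NAP ∘ q a symmetric operad. -/
import Mathlib
set_option linter.unusedSectionVars false
set_option linter.unusedVariables false
set_option maxHeartbeats 1000000


/-- A labelled rooted tree with vertex set `supp` inside an ambient label type `V`,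
given by its root and its parent function (normalized to the identity outside
`supp`, and fixing the root). -/
structure LTree (V : Type) where
  supp : Finset V
  root : V
  parent : V → V

namespace LTree

variable {V : Type} [DecidableEq V]

/-- `t` is an honest rooted tree on its vertex set `t.supp`:  the root is a vertex,
the parent map fixes the root, sends vertices to vertices, every vertex reaches the
root by iterating the parent map (connectedness/acyclicity), and the parent map is
normalized to the identity outside the vertex set. -/
def IsTree (t : LTree V) : Prop :=
  t.root ∈ t.supp ∧ t.parent t.root = t.root ∧
    (∀ v ∈ t.supp, t.parent v ∈ t.supp ∧ ∃ n, t.parent^[n] v = t.root) ∧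
    (∀ v, v ∉ t.supp → t.parent v = v)

/-- The NAP partial composition `u ∘ₛ v`: replace the vertex `s` of `u` by the tree
`v`, reconnecting each edge of `u` arriving at `s` to the root of `v`. -/
def ncomp (u : LTree V) (s : V) (v : LTree V) : LTree V where
  supp := u.supp.erase s ∪ v.supp
  root := if u.root = s then v.root else u.root
  parent x :=
    if x ∈ u.supp.erase s then (if u.parent x = s then v.root else u.parent x)
    else if x ∈ v.supp then
      (if x = v.root then (if u.parent s = s then v.root else u.parent s) else v.parent x)
    else x

/-- Relabelling a tree along a bijection of the ambient label type. -/
def relabel (e : V ≃ V) (t : LTree V) : LTree V where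
  supp := t.supp.image e
  root := e t.root
  parent x := e (t.parent (e.symm x))

/-- The single-vertex tree on the vertex `a`. -/
def eta (a : V) : LTree V := ⟨{a}, a, fun x => x⟩

/-- The edges of `u` arriving at `s`, identified with the children of `s`. -/
def children (u : LTree V) (s : V) : Finset V :=
  (u.supp.erase s).filter (fun w => u.parent w = s)

/-- The tree `u ∘ₛᶠ v` for `f : In(s,u) → Ver(v)`: replace the vertex `s` of `u` by
the tree `v`, reconnecting each edge `a ∈ In(s,u)` to the vertex `f a` of `v`. -/
def fcomp (u : LTree V) (s : V) (v : LTree V) (f : V → V) : LTree V where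
  supp := u.supp.erase s ∪ v.supp
  root := if u.root = s then v.root else u.root
  parent x :=
    if x ∈ u.supp.erase s then (if u.parent x = s then f x else u.parent x)
    else if x ∈ v.supp then
      (if x = v.root then (if u.parent s = s then v.root else u.parent s) else v.parent x)
    else x

/-- The Pre-Lie partial composition `u ∘ₛ v := Σ_{f : In(s,u) → Ver(v)} u ∘ₛᶠ v`,
a formal linear combination of rooted trees. -/
noncomputable def plcomp (u : LTree V) (s : V) (v : LTree V) : LTree V →₀ ℚ :=
  ∑ f : {w // w ∈ children u s} → {x // x ∈ v.supp},
    Finsupp.single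
      (fcomp u s v (fun w => if h : w ∈ children u s then (f ⟨w, h⟩ : V) else v.root)) 1

/-- Bilinear extension of the Pre-Lie partial composition to formal sums. -/
noncomputable def plext (x : LTree V →₀ ℚ) (s : V) (y : LTree V →₀ ℚ) : LTree V →₀ ℚ :=
  x.sum fun t a => y.sum fun u b => (a * b) • plcomp t s u

end LTree

/-- A positive symmetric operad `q`, presented in "supported elements" form over an
ambient label type `V`: a carrier type `Q` of operations, each with a nonempty
finite support (its finite input set) in `V`, together with partial compositions
`∘ₛ`, units, and relabelling along bijections of `V`, satisfying the symmetric
operad axioms (parallel and nested associativity, naturality, unitality). -/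
structure POperad (V : Type) (Q : Type) [DecidableEq V] where
  supp : Q → Finset V
  comp : Q → V → Q → Q
  unit : V → Q
  relabel : (V ≃ V) → Q → Q
  supp_nonempty : ∀ x, (supp x).Nonempty
  supp_comp : ∀ x s y, s ∈ supp x → supp (comp x s y) = (supp x).erase s ∪ supp y
  supp_unit : ∀ a, supp (unit a) = {a}
  supp_relabel : ∀ e x, supp (relabel e x) = (supp x).image e
  parallel : ∀ x y z s s', s ∈ supp x → s' ∈ supp x → s ≠ s' →
    Disjoint (supp x) (supp y) → Disjoint (supp x) (supp z) →
    Disjoint (supp y) (supp z) →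
    comp (comp x s y) s' z = comp (comp x s' z) s y
  nested : ∀ x y z s t, s ∈ supp x → t ∈ supp y →
    Disjoint (supp x) (supp y) → Disjoint (supp x) (supp z) →
    Disjoint (supp y) (supp z) →
    comp (comp x s y) t z = comp x s (comp y t z)
  natural : ∀ e x s y, s ∈ supp x →
    relabel e (comp x s y) = comp (relabel e x) (e s) (relabel e y)
  natural_unit : ∀ e a, relabel e (unit a) = unit (e a)
  unit_left : ∀ a y, comp (unit a) a y = y
  unit_right : ∀ x s, s ∈ supp x → comp x s (unit s) = x

namespace LTree

variable {V Q : Type} [DecidableEq V] [DecidableEq Q]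

/-- Rename the single vertex `o` of a tree to `n`. -/
def rename (t : LTree Q) (o n : Q) : LTree Q where
  supp := insert n (t.supp.erase o)
  root := if t.root = o then n else t.root
  parent x :=
    if x = n then (if t.parent o = o then n else t.parent o)
    else if x ∈ t.supp.erase o then (if t.parent x = o then n else t.parent x)
    else x

/-- Relabel the vertices of a tree along a map `f` (injective on the vertex set). -/
noncomputable def mapV (f : Q → Q) (t : LTree Q) : LTree Q where
  supp := t.supp.image f
  root := f t.root
  parent x := if h : ∃ v, v ∈ t.supp ∧ f v = x then f (t.parent h.choose) else x

end LTree

namespace NAPofQ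

variable {V Q : Type} [DecidableEq V] [DecidableEq Q]

/-- An element of the composite species `NAP ∘ q` on the set `I`: a rooted tree
whose vertices are `q`-operations (the blocks `C` of a partition `π ⊢ I` decorated
by `γ_C ∈ q[C]`).  Validity: the underlying tree is an honest rooted tree and the
supports of the decorations of distinct vertices are disjoint (so that they form a
partition of the total support). -/
def Valid (q : POperad V Q) (X : LTree Q) : Prop :=
  X.IsTree ∧ ∀ c ∈ X.supp, ∀ c' ∈ X.supp, c ≠ c' → Disjoint (q.supp c) (q.supp c')

/-- The total support (underlying set `I`) of an element of `NAP ∘ q`. -/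
def tsupp (q : POperad V Q) (X : LTree Q) : Finset V :=
  X.supp.biUnion q.supp

/-- The block `C_s` of `X` containing `s`: the unique vertex of `X` whose
decoration has `s` in its support. -/
noncomputable def blockOf (q : POperad V Q) (X : LTree Q) (s : V) : Q :=
  if h : ∃ c, c ∈ X.supp ∧ s ∈ q.supp c then h.choose else X.root

/-- The partial composition `□ₛ` on `NAP ∘ q`:
`(t ⊗ ⊗_C γ_C) □ₛ (u ⊗ ⊗_B β_B) = (t ∘_{C_s} u) ⊗ ⊗_D α_D`, where the tree of the
first factor is NAP-composed at the block `C_s` containing `s` with the tree of the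
second factor, the decoration of the merged block `C_s ⊔ₛ B_root(u)` is
`γ_{C_s} ∘ₛ β_{B_root(u)}`, and all other decorations are kept. -/
noncomputable def box (q : POperad V Q) (X : LTree Q) (s : V) (Y : LTree Q) : LTree Q :=
  LTree.ncomp X (blockOf q X s)
    (LTree.rename Y Y.root (q.comp (blockOf q X s) s Y.root))

/-- The unit of `NAP ∘ q` on a singleton `{a}`: the one-vertex tree decorated by
the unit of `q`. -/
def unitT (q : POperad V Q) (a : V) : LTree Q := ⟨{q.unit a}, q.unit a, fun x => x⟩

end NAPofQ


section NAPhelp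
open NAPofQ LTree
variable {V Q : Type} [DecidableEq V] [DecidableEq Q] (q : POperad V Q)

theorem LTree.tree_ext {t u : LTree Q} (h1 : t.supp = u.supp) (h2 : t.root = u.root)
    (h3 : ∀ x, t.parent x = u.parent x) : t = u := by
  cases t; cases u; simp_all; exact funext h3

/-- normal form parent function for `ncomp t c (rename u u.root m)` -/
def LTree.bp (t u : LTree Q) (c m : Q) (x : Q) : Q :=
  if x ∈ t.supp.erase c then (if t.parent x = c then m else t.parent x)
  else if x = m then (if t.parent c = c then m else t.parent c)
  else if x ∈ u.supp.erase u.root then (if u.parent x = u.root then m else u.parent x)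
  else x

theorem LTree.ncomp_rename (t u : LTree Q) (c m : Q) (hroot : u.parent u.root = u.root) :
    t.ncomp c (u.rename u.root m) =
      ⟨t.supp.erase c ∪ insert m (u.supp.erase u.root),
       if t.root = c then m else t.root, LTree.bp t u c m⟩ := by
  apply LTree.tree_ext
  · rfl
  · simp [ncomp, rename]
  · intro x
    simp only [ncomp, rename, LTree.bp, Finset.mem_insert, hroot, if_pos rfl]
    by_cases h1 : x ∈ t.supp.erase c
    · simp [h1]
    · simp only [h1, if_false]
      by_cases h2 : x = m
      · simp [h2]
      · simp only [h2, if_false]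
        by_cases h3 : x ∈ u.supp.erase u.root <;> simp [h2, h3]

/-- pairwise disjointness of block supports -/
def NAPofQ.PD (X : LTree Q) : Prop :=
  ∀ c ∈ X.supp, ∀ c' ∈ X.supp, c ≠ c' → Disjoint (q.supp c) (q.supp c')

theorem NAPofQ.supp_sub {X : LTree Q} {c : Q} (hc : c ∈ X.supp) : q.supp c ⊆ tsupp q X :=
  fun x hx => Finset.mem_biUnion.2 ⟨c, hc, hx⟩

theorem NAPofQ.blockOf_spec {X : LTree Q} {s : V} (h : s ∈ tsupp q X) :
    blockOf q X s ∈ X.supp ∧ s ∈ q.supp (blockOf q X s) := by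
  obtain ⟨c, hc, hs⟩ := Finset.mem_biUnion.1 h
  have hex : ∃ c, c ∈ X.supp ∧ s ∈ q.supp c := ⟨c, hc, hs⟩
  rw [blockOf, dif_pos hex]
  exact hex.choose_spec

theorem NAPofQ.blockOf_eq {X : LTree Q} {s : V} {c : Q} (hPD : PD q X) (hc : c ∈ X.supp)
    (hs : s ∈ q.supp c) : blockOf q X s = c := by
  have hex : ∃ c, c ∈ X.supp ∧ s ∈ q.supp c := ⟨c, hc, hs⟩
  rw [blockOf, dif_pos hex]
  by_contra hne
  exact Finset.disjoint_left.1 (hPD _ hex.choose_spec.1 _ hc hne) hex.choose_spec.2 hs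

theorem NAPofQ.parent_fix {t : LTree Q} (ht : t.IsTree) {c : Q} (hc : c ∈ t.supp)
    (h : t.parent c = c) : c = t.root := by
  obtain ⟨n, hn⟩ := (ht.2.2.1 c hc).2
  rwa [Function.iterate_fixed h n] at hn

theorem NAPofQ.ne_of_disjsupp {a b : Q} (h : Disjoint (q.supp a) (q.supp b)) : a ≠ b := by
  rintro rfl
  obtain ⟨x, hx⟩ := q.supp_nonempty a
  exact Finset.disjoint_left.1 h hx hx

theorem NAPofQ.notMem_of_witness {X : LTree Q} {m : Q} {r : V} (hr : r ∈ q.supp m)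
    (hr' : r ∉ tsupp q X) : m ∉ X.supp := fun h => hr' (NAPofQ.supp_sub q h hr)

theorem NAPofQ.box_eq {X Y : LTree Q} {s : V} {c : Q} (hroot : Y.parent Y.root = Y.root)
    (hb : blockOf q X s = c) :
    box q X s Y = ⟨X.supp.erase c ∪ insert (q.comp c s Y.root) (Y.supp.erase Y.root),
      if X.root = c then q.comp c s Y.root else X.root,
      LTree.bp X Y c (q.comp c s Y.root)⟩ := by
  rw [box, hb, LTree.ncomp_rename _ _ _ _ hroot]

end NAPhelp


section NAPeasy
open NAPofQ LTree
variable {V Q : Type} [DecidableEq V] [DecidableEq Q] (q : POperad V Q)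

theorem NAPofQ.pN2 : ∀ (a : V) (e : V ≃ V),
    LTree.mapV (q.relabel e) (unitT q a) = unitT q (e a) := by
  intro a e
  apply LTree.tree_ext
  · show ({q.unit a} : Finset Q).image (q.relabel e) = {q.unit (e a)}
    simp [q.natural_unit]
  · show q.relabel e (q.unit a) = q.unit (e a)
    exact q.natural_unit e a
  · intro x
    show (if h : ∃ v, v ∈ ({q.unit a} : Finset Q) ∧ q.relabel e v = x
        then q.relabel e ((unitT q a).parent h.choose) else x) = x
    split
    · next h =>
      have := h.choose_spec
      show q.relabel e h.choose = x
      exact this.2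
    · rfl

theorem NAPofQ.pU1 : ∀ (a : V) (Y : LTree Q), Valid q Y → a ∉ tsupp q Y →
    box q (unitT q a) a Y = Y := by
  intro a Y hY _
  have hb : blockOf q (unitT q a) a = q.unit a := by
    apply blockOf_eq q
    · intro c hc c' hc' hne
      simp [unitT] at hc hc'
      exact absurd (hc.trans hc'.symm) hne
    · simp [unitT]
    · simp [q.supp_unit]
  rw [NAPofQ.box_eq q hY.1.2.1 hb, q.unit_left]
  apply LTree.tree_ext
  · show ({q.unit a} : Finset Q).erase (q.unit a) ∪ insert Y.root (Y.supp.erase Y.root) = Y.supp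
    simp [Finset.insert_erase hY.1.1]
  · show (if (unitT q a).root = q.unit a then Y.root else (unitT q a).root) = Y.root
    simp [unitT]
  · intro x
    show LTree.bp (unitT q a) Y (q.unit a) Y.root x = Y.parent x
    rw [LTree.bp]
    have h1 : ({q.unit a} : Finset Q).erase (q.unit a) = ∅ := by simp
    show (if x ∈ ({q.unit a} : Finset Q).erase (q.unit a) then _ else _) = _
    rw [h1]
    simp only [Finset.notMem_empty, if_false]
    by_cases h2 : x = Y.root
    · subst h2
      simp [unitT, hY.1.2.1]
    · simp only [h2, if_false]
      by_cases h3 : x ∈ Y.supp.erase Y.root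
      · simp only [h3, if_true]
        split
        · next h4 => exact h4.symm
        · rfl
      · simp only [h3, if_false]
        have : x ∉ Y.supp := fun hx => h3 (Finset.mem_erase.2 ⟨h2, hx⟩)
        exact (hY.1.2.2.2 x this).symm

theorem NAPofQ.pU2 : ∀ (X : LTree Q) (s : V), Valid q X → s ∈ tsupp q X →
    box q X s (unitT q s) = X := by
  intro X s hX hs
  set C := blockOf q X s with hC
  obtain ⟨hCmem, hCs⟩ := blockOf_spec q hs
  rw [← hC] at hCmem hCs
  have hroot : (unitT q s).parent (unitT q s).root = (unitT q s).root := rfl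
  rw [NAPofQ.box_eq q hroot hC.symm]
  have hM : q.comp C s (unitT q s).root = C := q.unit_right C s hCs
  apply LTree.tree_ext
  · show X.supp.erase C ∪ insert (q.comp C s (unitT q s).root)
        (({q.unit s} : Finset Q).erase (q.unit s)) = X.supp
    rw [hM, Finset.erase_singleton]
    ext y
    by_cases hy : y = C <;> simp [hy, hCmem]
  · show (if X.root = C then q.comp C s (unitT q s).root else X.root) = X.root
    rw [hM]; split <;> simp_all
  · intro x
    show LTree.bp X (unitT q s) C (q.comp C s (unitT q s).root) x = X.parent x
    rw [LTree.bp, hM]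
    by_cases h1 : x ∈ X.supp.erase C
    · simp only [h1, if_true]; split <;> simp_all
    · simp only [h1, if_false]
      by_cases h2 : x = C
      · subst h2; simp only [if_pos rfl]; split <;> simp_all
      · simp only [h2, if_false]
        have h3 : x ∉ ({q.unit s} : Finset Q).erase (q.unit s) := by simp
        show (if x ∈ ({q.unit s} : Finset Q).erase (q.unit s) then _ else _) = _
        rw [if_neg h3]
        have : x ∉ X.supp := fun hx => h1 (Finset.mem_erase.2 ⟨h2, hx⟩)
        exact (hX.1.2.2.2 x this).symm

end NAPeasy


section NAPnat
open NAPofQ LTree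
variable {V Q : Type} [DecidableEq V] [DecidableEq Q] (q : POperad V Q)

theorem LTree.mapV_papp {f : Q → Q} {t : LTree Q}
    (hinj : ∀ a ∈ t.supp, ∀ b ∈ t.supp, f a = f b → a = b)
    {v : Q} (hv : v ∈ t.supp) : (LTree.mapV f t).parent (f v) = f (t.parent v) := by
  show (if h : ∃ w, w ∈ t.supp ∧ f w = f v then f (t.parent h.choose) else f v) = f (t.parent v)
  have hex : ∃ w, w ∈ t.supp ∧ f w = f v := ⟨v, hv, rfl⟩
  rw [dif_pos hex]
  have hsp := hex.choose_spec
  rw [hinj _ hsp.1 _ hv hsp.2]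

theorem LTree.mapV_pnot {f : Q → Q} {t : LTree Q} {x : Q} (hx : ∀ v ∈ t.supp, f v ≠ x) :
    (LTree.mapV f t).parent x = x := by
  show (if h : ∃ w, w ∈ t.supp ∧ f w = x then f (t.parent h.choose) else x) = x
  rw [dif_neg]
  rintro ⟨w, hw, he⟩
  exact hx w hw he

/-- pairwise disjointness of the supports of the blocks of a box composite -/
theorem NAPofQ.PD_box {X Y : LTree Q} {C R M : Q}
    (hPX : PD q X) (hPY : PD q Y) (hXY : Disjoint (tsupp q X) (tsupp q Y))
    (hCX : C ∈ X.supp) (hRY : R ∈ Y.supp) (hsM : q.supp M ⊆ q.supp C ∪ q.supp R) :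
    ∀ a ∈ X.supp.erase C ∪ insert M (Y.supp.erase R),
      ∀ b ∈ X.supp.erase C ∪ insert M (Y.supp.erase R),
        a ≠ b → Disjoint (q.supp a) (q.supp b) := by
  have dXY : ∀ u ∈ X.supp, ∀ v ∈ Y.supp, Disjoint (q.supp u) (q.supp v) := fun u hu v hv =>
    Finset.disjoint_of_subset_left (supp_sub q hu)
      (Finset.disjoint_of_subset_right (supp_sub q hv) hXY)
  have dM : ∀ u ∈ X.supp, u ≠ C → Disjoint (q.supp M) (q.supp u) := fun u hu hune =>
    Finset.disjoint_of_subset_left hsM (Finset.disjoint_union_left.2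
      ⟨hPX C hCX u hu (fun h => hune h.symm), (dXY u hu R hRY).symm⟩)
  have dM' : ∀ v ∈ Y.supp, v ≠ R → Disjoint (q.supp M) (q.supp v) := fun v hv hvne =>
    Finset.disjoint_of_subset_left hsM (Finset.disjoint_union_left.2
      ⟨dXY C hCX v hv, hPY R hRY v hv (fun h => hvne h.symm)⟩)
  intro a ha b hb hne
  simp only [Finset.mem_union, Finset.mem_insert, Finset.mem_erase] at ha hb
  rcases ha with ⟨haC, haX⟩ | rfl | ⟨haR, haY⟩ <;>
    rcases hb with ⟨hbC, hbX⟩ | rfl | ⟨hbR, hbY⟩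
  · exact hPX a haX b hbX hne
  · exact (dM a haX haC).symm
  · exact dXY a haX b hbY
  · exact dM b hbX hbC
  · exact absurd rfl hne
  · exact dM' b hbY hbR
  · exact (dXY b hbX a haY).symm
  · exact (dM' a haY haR).symm
  · exact hPY a haY b hbY hne

theorem NAPofQ.pN1 : ∀ (X Y : LTree Q), Valid q X → Valid q Y →
    Disjoint (tsupp q X) (tsupp q Y) →
    ∀ s : V, s ∈ tsupp q X → ∀ e : V ≃ V,
      LTree.mapV (q.relabel e) (box q X s Y) =
        box q (LTree.mapV (q.relabel e) X) (e s) (LTree.mapV (q.relabel e) Y) := by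
  intro X Y hX hY hXY s hs e
  set f := q.relabel e with hf
  have hsuppf : ∀ a : Q, q.supp (f a) = (q.supp a).image e := fun a => q.supp_relabel e a
  -- basic inequality producer
  have hne' : ∀ a b : Q, (∃ r, r ∈ q.supp a ∧ r ∉ q.supp b) → a ≠ b := by
    rintro a b ⟨r, hr, hr'⟩ rfl; exact hr' hr
  have hfne : ∀ a b : Q, (∃ r, r ∈ q.supp a ∧ r ∉ q.supp b) → f a ≠ f b := by
    rintro a b ⟨r, hr, hr'⟩ h
    have h2 : (q.supp a).image e = (q.supp b).image e := by rw [← hsuppf, ← hsuppf, h]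
    have h3 : e r ∈ (q.supp b).image e := h2 ▸ Finset.mem_image_of_mem e hr
    obtain ⟨r', hr'', he2⟩ := Finset.mem_image.1 h3
    exact hr' (e.injective he2 ▸ hr'')
  have hdisj_wit : ∀ a b : Q, Disjoint (q.supp a) (q.supp b) →
      (∃ r, r ∈ q.supp a ∧ r ∉ q.supp b) := by
    intro a b hd
    obtain ⟨r, hr⟩ := q.supp_nonempty a
    exact ⟨r, hr, Finset.disjoint_left.1 hd hr⟩
  have dXY : ∀ u ∈ X.supp, ∀ v ∈ Y.supp, Disjoint (q.supp u) (q.supp v) := fun u hu v hv =>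
    Finset.disjoint_of_subset_left (supp_sub q hu)
      (Finset.disjoint_of_subset_right (supp_sub q hv) hXY)
  have hinjX : ∀ a ∈ X.supp, ∀ b ∈ X.supp, f a = f b → a = b := by
    intro a ha b hb hab
    by_contra hab'
    exact hfne a b (hdisj_wit a b (hX.2 a ha b hb hab')) hab
  have hinjY : ∀ a ∈ Y.supp, ∀ b ∈ Y.supp, f a = f b → a = b := by
    intro a ha b hb hab
    by_contra hab'
    exact hfne a b (hdisj_wit a b (hY.2 a ha b hb hab')) hab
  set C := blockOf q X s with hC
  obtain ⟨hCX, hsC⟩ := blockOf_spec q hs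
  rw [← hC] at hCX hsC
  set R := Y.root with hR
  have hRY : R ∈ Y.supp := hY.1.1
  set M := q.comp C s R with hM
  have hsuppM : q.supp M = (q.supp C).erase s ∪ q.supp R := q.supp_comp C s R hsC
  have hsMsub : q.supp M ⊆ q.supp C ∪ q.supp R := by
    rw [hsuppM]
    exact Finset.union_subset_union (Finset.erase_subset s _) le_rfl
  obtain ⟨rY, hrY⟩ := q.supp_nonempty R
  have hrYM : rY ∈ q.supp M := by
    rw [hsuppM]; exact Finset.mem_union_right _ hrY
  have hrYtY : rY ∈ tsupp q Y := supp_sub q hRY hrY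
  have hrYnX : ∀ a ∈ X.supp, rY ∉ q.supp a := fun a ha h =>
    Finset.disjoint_left.1 hXY (supp_sub q ha h) hrYtY
  -- the box on the left, in normal form
  have PDS := NAPofQ.PD_box q hX.2 hY.2 hXY hCX hRY hsMsub
  have hinjS : ∀ a ∈ X.supp.erase C ∪ insert M (Y.supp.erase R),
      ∀ b ∈ X.supp.erase C ∪ insert M (Y.supp.erase R), f a = f b → a = b := by
    intro a ha b hb hab
    by_contra hab'
    exact hfne a b (hdisj_wit a b (PDS a ha b hb hab')) hab
  -- blockOf on the mapped tree
  have hbmap : blockOf q (LTree.mapV f X) (e s) = f C := by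
    apply blockOf_eq q
    · intro c hc c' hc' hcc
      obtain ⟨a, ha, rfl⟩ := Finset.mem_image.1 hc
      obtain ⟨a', ha', rfl⟩ := Finset.mem_image.1 hc'
      rw [hsuppf, hsuppf]
      rw [Finset.disjoint_image e.injective]
      exact hX.2 a ha a' ha' (fun h => hcc (h ▸ rfl))
    · exact Finset.mem_image_of_mem f hCX
    · rw [hsuppf]; exact Finset.mem_image_of_mem e hsC
  have hrootY' : (LTree.mapV f Y).parent (LTree.mapV f Y).root = (LTree.mapV f Y).root := by
    show (LTree.mapV f Y).parent (f R) = f R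
    rw [LTree.mapV_papp hinjY hRY, hY.1.2.1]
  have hfM : q.comp (f C) (e s) ((LTree.mapV f Y).root) = f M := by
    show q.comp (f C) (e s) (f R) = f M
    rw [hM, hf]
    exact (q.natural e C s R hsC).symm
  rw [NAPofQ.box_eq q hY.1.2.1 hC.symm, NAPofQ.box_eq q hrootY' hbmap, hfM]
  -- membership eliminators
  have hfMX : ∀ a ∈ X.supp, f M ≠ f a := fun a ha => hfne M a ⟨rY, hrYM, hrYnX a ha⟩
  have hfMY : ∀ b ∈ Y.supp, b ≠ R → f M ≠ f b := fun b hb hbR =>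
    hfne M b ⟨rY, hrYM, Finset.disjoint_left.1 (hY.2 R hRY b hb (fun h => hbR h.symm)) hrY⟩
  have hfYX : ∀ b ∈ Y.supp, ∀ a ∈ X.supp, f b ≠ f a := fun b hb a ha =>
    hfne b a (hdisj_wit b a (dXY a ha b hb).symm)
  apply LTree.tree_ext
  · -- supports
    show (X.supp.erase C ∪ insert M (Y.supp.erase R)).image f =
      (X.supp.image f).erase (f C) ∪ insert (f M) ((Y.supp.image f).erase (f R))
    ext x
    simp only [Finset.mem_image, Finset.mem_union, Finset.mem_insert, Finset.mem_erase]
    constructor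
    · rintro ⟨v, hv, rfl⟩
      rcases hv with hv | hv | hv
      · exact Or.inl ⟨fun h => hv.1 (hinjX v hv.2 C hCX h), v, hv.2, rfl⟩
      · exact Or.inr (Or.inl (congrArg f hv))
      · exact Or.inr (Or.inr ⟨fun h => hv.1 (hinjY v hv.2 R hRY h), v, hv.2, rfl⟩)
    · rintro (⟨hne, a, ha, rfl⟩ | rfl | ⟨hne, b, hb, rfl⟩)
      · exact ⟨a, Or.inl ⟨fun h => hne (congrArg f h), ha⟩, rfl⟩
      · exact ⟨M, Or.inr (Or.inl rfl), rfl⟩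
      · exact ⟨b, Or.inr (Or.inr ⟨fun h => hne (congrArg f h), hb⟩), rfl⟩
  · -- roots
    show f (if X.root = C then M else X.root) =
      (if (LTree.mapV f X).root = f C then f M else (LTree.mapV f X).root)
    show f (if X.root = C then M else X.root) = (if f X.root = f C then f M else f X.root)
    by_cases h : X.root = C
    · rw [if_pos h, if_pos (congrArg f h)]
    · rw [if_neg h, if_neg (fun hh => h (hinjX X.root hX.1.1 C hCX hh))]
  · -- parents
    intro x
    by_cases hx : ∃ v, v ∈ X.supp.erase C ∪ insert M (Y.supp.erase R) ∧ f v = x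
    · obtain ⟨v, hv, rfl⟩ := hx
      rw [show (LTree.mapV f ⟨X.supp.erase C ∪ insert M (Y.supp.erase R),
          if X.root = C then M else X.root, LTree.bp X Y C M⟩).parent (f v)
          = f (LTree.bp X Y C M v) from LTree.mapV_papp hinjS hv]
      simp only [LTree.bp]
      rcases Finset.mem_union.1 hv with hv1 | hv2
      · -- v ∈ X.supp.erase C
        have hvX := (Finset.mem_erase.1 hv1).2
        have hvC := (Finset.mem_erase.1 hv1).1
        rw [if_pos hv1]
        have hmem : f v ∈ ((LTree.mapV f X).supp.erase (f C)) := by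
          show f v ∈ (X.supp.image f).erase (f C)
          exact Finset.mem_erase.2 ⟨fun h => hvC (hinjX v hvX C hCX h),
            Finset.mem_image_of_mem f hvX⟩
        rw [if_pos hmem]
        rw [show (LTree.mapV f X).parent (f v) = f (X.parent v) from LTree.mapV_papp hinjX hvX]
        have hpX : X.parent v ∈ X.supp := (hX.1.2.2.1 v hvX).1
        by_cases hp : X.parent v = C
        · rw [if_pos hp, if_pos (congrArg f hp)]
        · rw [if_neg hp, if_neg (fun hh => hp (hinjX _ hpX C hCX hh))]
      · rcases Finset.mem_insert.1 hv2 with rfl | hv3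
        · -- v = M
          have hMX : M ∉ X.supp.erase C := fun h =>
            hrYnX M (Finset.mem_erase.1 h).2 hrYM
          rw [if_neg hMX, if_pos rfl]
          have hmem : f M ∉ ((LTree.mapV f X).supp.erase (f C)) := by
            show f M ∉ (X.supp.image f).erase (f C)
            intro h
            obtain ⟨a, ha, hh⟩ := Finset.mem_image.1 (Finset.mem_erase.1 h).2
            exact hfMX a ha hh.symm
          rw [if_neg hmem, if_pos rfl]
          rw [show (LTree.mapV f X).parent (f C) = f (X.parent C) from
            LTree.mapV_papp hinjX hCX]
          have hpX : X.parent C ∈ X.supp := (hX.1.2.2.1 C hCX).1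
          by_cases hp : X.parent C = C
          · rw [if_pos hp, if_pos (congrArg f hp)]
          · rw [if_neg hp, if_neg (fun hh => hp (hinjX _ hpX C hCX hh))]
        · -- v ∈ Y.supp.erase R
          have hvY := (Finset.mem_erase.1 hv3).2
          have hvR := (Finset.mem_erase.1 hv3).1
          have hvnX : v ∉ X.supp.erase C := fun h => by
            obtain ⟨r, hr⟩ := q.supp_nonempty v
            exact Finset.disjoint_left.1 hXY (supp_sub q (Finset.mem_erase.1 h).2 hr)
              (supp_sub q hvY hr)
          rw [if_neg hvnX]
          have hvnM : v ≠ M := fun h =>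
            Finset.disjoint_left.1 (hY.2 R hRY v hvY (fun h2 => hvR h2.symm)) hrY (h ▸ hrYM)
          rw [if_neg hvnM, if_pos hv3]
          have hmem1 : f v ∉ ((LTree.mapV f X).supp.erase (f C)) := by
            show f v ∉ (X.supp.image f).erase (f C)
            intro h
            obtain ⟨a, ha, hh⟩ := Finset.mem_image.1 (Finset.mem_erase.1 h).2
            exact hfYX v hvY a ha hh.symm
          rw [if_neg hmem1]
          rw [if_neg (fun hh : f v = f M => hfMY v hvY hvR hh.symm)]
          have hmem3 : f v ∈ ((LTree.mapV f Y).supp.erase ((LTree.mapV f Y).root)) := by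
            show f v ∈ (Y.supp.image f).erase (f R)
            exact Finset.mem_erase.2 ⟨fun h => hvR (hinjY v hvY R hRY h),
              Finset.mem_image_of_mem f hvY⟩
          rw [if_pos hmem3]
          rw [show (LTree.mapV f Y).parent (f v) = f (Y.parent v) from LTree.mapV_papp hinjY hvY]
          have hpY : Y.parent v ∈ Y.supp := (hY.1.2.2.1 v hvY).1
          show f (if Y.parent v = R then M else Y.parent v) =
            (if f (Y.parent v) = f R then f M else f (Y.parent v))
          by_cases hp : Y.parent v = R
          · rw [if_pos hp, if_pos (congrArg f hp)]
          · rw [if_neg hp, if_neg (fun hh => hp (hinjY _ hpY R hRY hh))]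
    · -- x not in the image
      rw [show (LTree.mapV f ⟨X.supp.erase C ∪ insert M (Y.supp.erase R),
          if X.root = C then M else X.root, LTree.bp X Y C M⟩).parent x = x from
        LTree.mapV_pnot (fun v hv hh => hx ⟨v, hv, hh⟩)]
      simp only [LTree.bp]
      have h1 : x ∉ ((LTree.mapV f X).supp.erase (f C)) := by
        show x ∉ (X.supp.image f).erase (f C)
        intro h
        obtain ⟨hne, h2⟩ := Finset.mem_erase.1 h
        obtain ⟨a, ha, rfl⟩ := Finset.mem_image.1 h2
        have haC : a ≠ C := fun h => hne (h ▸ rfl)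
        exact hx ⟨a, Finset.mem_union_left _ (Finset.mem_erase.2 ⟨haC, ha⟩), rfl⟩
      rw [if_neg h1]
      have h2 : x ≠ f M := fun h =>
        hx ⟨M, Finset.mem_union_right _ (Finset.mem_insert_self _ _), h.symm⟩
      rw [if_neg h2]
      have h3 : x ∉ ((LTree.mapV f Y).supp.erase ((LTree.mapV f Y).root)) := by
        show x ∉ (Y.supp.image f).erase (f R)
        intro h
        obtain ⟨hne, h4⟩ := Finset.mem_erase.1 h
        obtain ⟨b, hb, rfl⟩ := Finset.mem_image.1 h4
        have hbR : b ≠ R := fun h => hne (h ▸ rfl)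
        exact hx ⟨b, Finset.mem_union_right _
          (Finset.mem_insert_of_mem (Finset.mem_erase.2 ⟨hbR, hb⟩)), rfl⟩
      rw [if_neg h3]

end NAPnat


section NAPassoc
open NAPofQ LTree
variable {V Q : Type} [DecidableEq V] [DecidableEq Q] (q : POperad V Q)

theorem NAPofQ.pA1 : ∀ (X Y Z : LTree Q), Valid q X → Valid q Y → Valid q Z →
    Disjoint (tsupp q X) (tsupp q Y) → Disjoint (tsupp q X) (tsupp q Z) →
    Disjoint (tsupp q Y) (tsupp q Z) →
    ∀ s s' : V, s ∈ tsupp q X → s' ∈ tsupp q X → s ≠ s' →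
      box q (box q X s Y) s' Z = box q (box q X s' Z) s Y := by
  intro X Y Z hX hY hZ hXY hXZ hYZ s s' hsX hs'X hss'
  have hne' : ∀ a b : Q, (∃ r, r ∈ q.supp a ∧ r ∉ q.supp b) → a ≠ b := by
    rintro a b ⟨r, hr, hr'⟩ rfl; exact hr' hr
  have pX : ∀ v ∈ X.supp, X.parent v ∈ X.supp := fun v hv => (hX.1.2.2.1 v hv).1
  have pY : ∀ v ∈ Y.supp, Y.parent v ∈ Y.supp := fun v hv => (hY.1.2.2.1 v hv).1
  have pZ : ∀ v ∈ Z.supp, Z.parent v ∈ Z.supp := fun v hv => (hZ.1.2.2.1 v hv).1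
  have vXY : ∀ a ∈ X.supp, ∀ b ∈ Y.supp, a ≠ b := fun a ha b hb => by
    obtain ⟨r, hr⟩ := q.supp_nonempty a
    exact hne' a b ⟨r, hr, fun h => Finset.disjoint_left.1 hXY (supp_sub q ha hr) (supp_sub q hb h)⟩
  have vXZ : ∀ a ∈ X.supp, ∀ b ∈ Z.supp, a ≠ b := fun a ha b hb => by
    obtain ⟨r, hr⟩ := q.supp_nonempty a
    exact hne' a b ⟨r, hr, fun h => Finset.disjoint_left.1 hXZ (supp_sub q ha hr) (supp_sub q hb h)⟩
  have vYZ : ∀ a ∈ Y.supp, ∀ b ∈ Z.supp, a ≠ b := fun a ha b hb => by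
    obtain ⟨r, hr⟩ := q.supp_nonempty a
    exact hne' a b ⟨r, hr, fun h => Finset.disjoint_left.1 hYZ (supp_sub q ha hr) (supp_sub q hb h)⟩
  set C := blockOf q X s with hC
  obtain ⟨hCX, hsC⟩ := blockOf_spec q hsX
  rw [← hC] at hCX hsC
  set C' := blockOf q X s' with hC'
  obtain ⟨hC'X, hs'C'⟩ := blockOf_spec q hs'X
  rw [← hC'] at hC'X hs'C'
  obtain ⟨rY, hrY⟩ := q.supp_nonempty Y.root
  obtain ⟨rZ, hrZ⟩ := q.supp_nonempty Z.root
  have hrYtY : rY ∈ tsupp q Y := supp_sub q hY.1.1 hrY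
  have hrZtZ : rZ ∈ tsupp q Z := supp_sub q hZ.1.1 hrZ
  have hrYnX : rY ∉ tsupp q X := Finset.disjoint_right.1 hXY hrYtY
  have hrZnX : rZ ∉ tsupp q X := Finset.disjoint_right.1 hXZ hrZtZ
  have hrYnZ : rY ∉ tsupp q Z := Finset.disjoint_left.1 hYZ hrYtY
  have hrZnY : rZ ∉ tsupp q Y := Finset.disjoint_right.1 hYZ hrZtZ
  set MY := q.comp C s Y.root with hMY
  have hsMY : q.supp MY = (q.supp C).erase s ∪ q.supp Y.root := q.supp_comp C s Y.root hsC
  have hrYMY : rY ∈ q.supp MY := by rw [hsMY]; exact Finset.mem_union_right _ hrY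
  have hMYX : MY ∉ X.supp := notMem_of_witness q hrYMY hrYnX
  have hMYZ : MY ∉ Z.supp := notMem_of_witness q hrYMY hrYnZ
  have hMYYer : MY ∉ Y.supp.erase Y.root := by
    intro h
    obtain ⟨h1, h2⟩ := Finset.mem_erase.1 h
    exact hne' MY MY ⟨rY, hrYMY, fun hcon =>
      Finset.disjoint_left.1 (hY.2 Y.root hY.1.1 MY h2 (fun hh => h1 hh.symm)) hrY hcon⟩ rfl
  have hsMYsub : q.supp MY ⊆ q.supp C ∪ q.supp Y.root := by
    rw [hsMY]; exact Finset.union_subset_union (Finset.erase_subset s _) le_rfl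
  have PDS : ∀ a ∈ X.supp.erase C ∪ insert MY (Y.supp.erase Y.root),
      ∀ b ∈ X.supp.erase C ∪ insert MY (Y.supp.erase Y.root),
        a ≠ b → Disjoint (q.supp a) (q.supp b) :=
    NAPofQ.PD_box q hX.2 hY.2 hXY hCX hY.1.1 hsMYsub
  rw [NAPofQ.box_eq q hY.1.2.1 hC.symm]
  by_cases hs'C : s' ∈ q.supp C
  · -- Case 2 : the two blocks coincide
    have hbC : blockOf q X s' = C := blockOf_eq q hX.2 hCX hs'C
    set MZ2 := q.comp C s' Z.root with hMZ2
    have hsMZ2 : q.supp MZ2 = (q.supp C).erase s' ∪ q.supp Z.root := q.supp_comp C s' Z.root hs'C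
    have hrZMZ2 : rZ ∈ q.supp MZ2 := by rw [hsMZ2]; exact Finset.mem_union_right _ hrZ
    have hMZ2X : MZ2 ∉ X.supp := notMem_of_witness q hrZMZ2 hrZnX
    have hMZ2Y : MZ2 ∉ Y.supp := notMem_of_witness q hrZMZ2 hrZnY
    have hMZ2Zer : MZ2 ∉ Z.supp.erase Z.root := by
      intro h
      obtain ⟨h1, h2⟩ := Finset.mem_erase.1 h
      exact hne' MZ2 MZ2 ⟨rZ, hrZMZ2, fun hcon =>
        Finset.disjoint_left.1 (hZ.2 Z.root hZ.1.1 MZ2 h2 (fun hh => h1 hh.symm)) hrZ hcon⟩ rfl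
    have hs'MY : s' ∈ q.supp MY := by
      rw [hsMY]
      exact Finset.mem_union_left _ (Finset.mem_erase.2 ⟨Ne.symm hss', hs'C⟩)
    set N := q.comp MY s' Z.root with hN
    have hsN : q.supp N = (q.supp MY).erase s' ∪ q.supp Z.root := q.supp_comp MY s' Z.root hs'MY
    have hrZN : rZ ∈ q.supp N := by rw [hsN]; exact Finset.mem_union_right _ hrZ
    have hrYN : rY ∈ q.supp N := by
      rw [hsN]
      exact Finset.mem_union_left _ (Finset.mem_erase.2 ⟨fun h => hrYnX (h ▸ hs'X), hrYMY⟩)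
    have hNX : N ∉ X.supp := notMem_of_witness q hrZN hrZnX
    have hNY : N ∉ Y.supp := notMem_of_witness q hrZN hrZnY
    have hNZer : N ∉ Z.supp.erase Z.root := by
      intro h
      obtain ⟨h1, h2⟩ := Finset.mem_erase.1 h
      exact hne' N N ⟨rZ, hrZN, fun hcon =>
        Finset.disjoint_left.1 (hZ.2 Z.root hZ.1.1 N h2 (fun hh => h1 hh.symm)) hrZ hcon⟩ rfl
    have hrZnMY : rZ ∉ q.supp MY := by
      rw [hsMY]
      intro h
      rcases Finset.mem_union.1 h with h | h
      · exact hrZnX (supp_sub q hCX (Finset.mem_of_mem_erase h))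
      · exact hrZnY (supp_sub q hY.1.1 h)
    have hrYnMZ2 : rY ∉ q.supp MZ2 := by
      rw [hsMZ2]
      intro h
      rcases Finset.mem_union.1 h with h | h
      · exact hrYnX (supp_sub q hCX (Finset.mem_of_mem_erase h))
      · exact hrYnZ (supp_sub q hZ.1.1 h)
    have hNMY : N ≠ MY := hne' N MY ⟨rZ, hrZN, hrZnMY⟩
    have hMYN : MY ≠ N := fun h => hNMY h.symm
    have hNMZ2 : N ≠ MZ2 := hne' N MZ2 ⟨rY, hrYN, hrYnMZ2⟩
    have hMZ2N : MZ2 ≠ N := fun h => hNMZ2 h.symm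
    have hMYMZ2 : MY ≠ MZ2 := hne' MY MZ2 ⟨rY, hrYMY, hrYnMZ2⟩
    have hMZ2MY : MZ2 ≠ MY := fun h => hMYMZ2 h.symm
    have hCY : C ∉ Y.supp := fun h => vXY C hCX C h rfl
    have hCZ : C ∉ Z.supp := fun h => vXZ C hCX C h rfl
    have hCMY : C ≠ MY := fun h => hMYX (h ▸ hCX)
    have hCMZ2 : C ≠ MZ2 := fun h => hMZ2X (h ▸ hCX)
    have hCN : C ≠ N := fun h => hNX (h ▸ hCX)
    have hMYnYer : ¬(MY ≠ Y.root ∧ MY ∈ Y.supp) := fun h => hMYYer (Finset.mem_erase.2 h)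
    have hMZ2nZer : ¬(MZ2 ≠ Z.root ∧ MZ2 ∈ Z.supp) := fun h => hMZ2Zer (Finset.mem_erase.2 h)
    have hNnZer : ¬(N ≠ Z.root ∧ N ∈ Z.supp) := fun h => hNZer (Finset.mem_erase.2 h)
    -- blockOf computations
    have hbMY : blockOf q (⟨X.supp.erase C ∪ insert MY (Y.supp.erase Y.root),
        if X.root = C then MY else X.root, LTree.bp X Y C MY⟩ : LTree Q) s' = MY := by
      refine blockOf_eq q ?_ ?_ hs'MY
      · exact PDS
      · exact Finset.mem_union_right _ (Finset.mem_insert_self _ _)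
    rw [NAPofQ.box_eq q hZ.1.2.1 hbMY]
    rw [NAPofQ.box_eq q hZ.1.2.1 hbC]
    have hsMZ2sub : q.supp MZ2 ⊆ q.supp C ∪ q.supp Z.root := by
      rw [hsMZ2]; exact Finset.union_subset_union (Finset.erase_subset s' _) le_rfl
    have PDS2 : ∀ a ∈ X.supp.erase C ∪ insert MZ2 (Z.supp.erase Z.root),
        ∀ b ∈ X.supp.erase C ∪ insert MZ2 (Z.supp.erase Z.root),
          a ≠ b → Disjoint (q.supp a) (q.supp b) :=
      NAPofQ.PD_box q hX.2 hZ.2 hXZ hCX hZ.1.1 hsMZ2sub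
    have hsMZ2' : s ∈ q.supp MZ2 := by
      rw [hsMZ2]
      exact Finset.mem_union_left _ (Finset.mem_erase.2 ⟨hss', hsC⟩)
    have hbMZ2 : blockOf q (⟨X.supp.erase C ∪ insert MZ2 (Z.supp.erase Z.root),
        if X.root = C then MZ2 else X.root, LTree.bp X Z C MZ2⟩ : LTree Q) s = MZ2 := by
      refine blockOf_eq q ?_ ?_ hsMZ2'
      · exact PDS2
      · exact Finset.mem_union_right _ (Finset.mem_insert_self _ _)
    rw [NAPofQ.box_eq q hY.1.2.1 hbMZ2]
    have dCY : Disjoint (q.supp C) (q.supp Y.root) :=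
      Finset.disjoint_of_subset_left (supp_sub q hCX)
        (Finset.disjoint_of_subset_right (supp_sub q hY.1.1) hXY)
    have dCZ : Disjoint (q.supp C) (q.supp Z.root) :=
      Finset.disjoint_of_subset_left (supp_sub q hCX)
        (Finset.disjoint_of_subset_right (supp_sub q hZ.1.1) hXZ)
    have dYZ' : Disjoint (q.supp Y.root) (q.supp Z.root) :=
      Finset.disjoint_of_subset_left (supp_sub q hY.1.1)
        (Finset.disjoint_of_subset_right (supp_sub q hZ.1.1) hYZ)
    have hNN : q.comp MZ2 s Y.root = N :=
      (q.parallel C Y.root Z.root s s' hsC hs'C hss' dCY dCZ dYZ').symm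
    rw [hNN]
    apply LTree.tree_ext
    · -- supports
      show (X.supp.erase C ∪ insert MY (Y.supp.erase Y.root)).erase MY
          ∪ insert N (Z.supp.erase Z.root)
        = (X.supp.erase C ∪ insert MZ2 (Z.supp.erase Z.root)).erase MZ2
          ∪ insert N (Y.supp.erase Y.root)
      ext x
      simp only [Finset.mem_union, Finset.mem_insert, Finset.mem_erase]
      constructor
      · rintro (⟨h0, (⟨h1, h2⟩ | h | ⟨h3, h4⟩)⟩ | h | ⟨h5, h6⟩)
        · exact Or.inl ⟨fun hh => hMZ2X (hh ▸ h2), Or.inl ⟨h1, h2⟩⟩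
        · exact absurd h h0
        · exact Or.inr (Or.inr ⟨h3, h4⟩)
        · exact Or.inr (Or.inl h)
        · exact Or.inl ⟨fun hh => hMZ2Zer (hh ▸ Finset.mem_erase.2 ⟨h5, h6⟩),
            Or.inr (Or.inr ⟨h5, h6⟩)⟩
      · rintro (⟨h0, (⟨h1, h2⟩ | h | ⟨h3, h4⟩)⟩ | h | ⟨h5, h6⟩)
        · exact Or.inl ⟨fun hh => hMYX (hh ▸ h2), Or.inl ⟨h1, h2⟩⟩
        · exact absurd h h0
        · exact Or.inr (Or.inr ⟨h3, h4⟩)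
        · exact Or.inr (Or.inl h)
        · exact Or.inl ⟨fun hh => hMYYer (hh ▸ Finset.mem_erase.2 ⟨h5, h6⟩),
            Or.inr (Or.inr ⟨h5, h6⟩)⟩
    · -- roots
      show (if (if X.root = C then MY else X.root) = MY then N
            else (if X.root = C then MY else X.root))
        = (if (if X.root = C then MZ2 else X.root) = MZ2 then N
            else (if X.root = C then MZ2 else X.root))
      by_cases h1 : X.root = C
      · rw [if_pos h1, if_pos rfl, if_pos h1, if_pos rfl]
      · have e1 : X.root ≠ MY := fun h => hMYX (h ▸ hX.1.1)
        have e2 : X.root ≠ MZ2 := fun h => hMZ2X (h ▸ hX.1.1)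
        rw [if_neg h1, if_neg e1, if_neg h1, if_neg e2]
    · -- parents
      intro x
      show LTree.bp (⟨X.supp.erase C ∪ insert MY (Y.supp.erase Y.root),
          if X.root = C then MY else X.root, LTree.bp X Y C MY⟩ : LTree Q) Z MY N x
        = LTree.bp (⟨X.supp.erase C ∪ insert MZ2 (Z.supp.erase Z.root),
          if X.root = C then MZ2 else X.root, LTree.bp X Z C MZ2⟩ : LTree Q) Y MZ2 N x
      simp only [LTree.bp, Finset.mem_union, Finset.mem_insert, Finset.mem_erase]
      by_cases hx1 : x ∈ X.supp
      · have hxY : x ∉ Y.supp := fun h => vXY x hx1 x h rfl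
        have hxZ : x ∉ Z.supp := fun h => vXZ x hx1 x h rfl
        have hxMY : x ≠ MY := fun h => hMYX (h ▸ hx1)
        have hxMZ2 : x ≠ MZ2 := fun h => hMZ2X (h ▸ hx1)
        have hxN : x ≠ N := fun h => hNX (h ▸ hx1)
        by_cases hx2 : x = C
        · subst hx2
          simp [hxY, hxZ, hxMY, hxMZ2, hxN]
        · have hpxX : X.parent x ∈ X.supp := pX x hx1
          have hpMY : X.parent x ≠ MY := fun h => hMYX (h ▸ hpxX)
          have hpMZ2 : X.parent x ≠ MZ2 := fun h => hMZ2X (h ▸ hpxX)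
          by_cases hp : X.parent x = C
          · simp [hx1, hx2, hxMY, hxMZ2, hxN, hxY, hxZ, hp]
          · simp [hx1, hx2, hxMY, hxMZ2, hxN, hxY, hxZ, hp, hpMY, hpMZ2]
      · by_cases hx4 : x = MY
        · subst hx4
          simp [hMYX, hMYZ, hMYMZ2, hMYN, hMYnYer, hCMY]
        · by_cases hx5 : x = MZ2
          · subst hx5
            simp [hMZ2X, hMZ2Y, hMZ2MY, hMZ2N, hMZ2nZer, hCMZ2]
          · by_cases hxN : x = N
            · subst hxN
              have hpCX : X.parent C ∈ X.supp := pX C hCX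
              have hpCMY : X.parent C ≠ MY := fun h => hMYX (h ▸ hpCX)
              have hpCMZ2 : X.parent C ≠ MZ2 := fun h => hMZ2X (h ▸ hpCX)
              have hNnYer : ¬(N ≠ Y.root ∧ N ∈ Y.supp) := fun h => hNY h.2
              by_cases hp : X.parent C = C
              · simp [hNX, hNY, hNMY, hNMZ2, hNnZer, hNnYer, hCN, hp, hMYX, hMZ2X,
                  hCMY, hCMZ2, hMYMZ2, hMZ2MY]
              · simp [hNX, hNY, hNMY, hNMZ2, hNnZer, hNnYer, hCN, hp, hpCMY, hpCMZ2,
                  hMYX, hMZ2X, hCMY, hCMZ2, hMYMZ2, hMZ2MY]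
            · by_cases hx6 : x ∈ Y.supp
              · by_cases hx6r : x = Y.root
                · subst hx6r
                  have e1 : Y.root ∉ X.supp := fun h => vXY Y.root h Y.root hx6 rfl
                  have e2 : Y.root ∉ Z.supp := fun h => vYZ Y.root hx6 Y.root h rfl
                  simp [e1, e2, hx4, hx5, hxN]
                · have hxZ : x ∉ Z.supp := fun h => vYZ x hx6 x h rfl
                  have hpxY : Y.parent x ∈ Y.supp := pY x hx6
                  by_cases hp : Y.parent x = Y.root
                  · simp [hx1, hx4, hx5, hxN, hx6, hx6r, hxZ, hp]
                  · have hpMY : Y.parent x ≠ MY := fun h =>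
                      hMYYer (h ▸ Finset.mem_erase.2 ⟨hp, hpxY⟩)
                    simp [hx1, hx4, hx5, hxN, hx6, hx6r, hxZ, hp, hpMY]
              · by_cases hx7 : x ∈ Z.supp
                · by_cases hx7r : x = Z.root
                  · subst hx7r
                    have e1 : Z.root ∉ X.supp := fun h => vXZ Z.root h Z.root hx7 rfl
                    simp [e1, hx6, hx4, hx5, hxN]
                  · have hpxZ : Z.parent x ∈ Z.supp := pZ x hx7
                    by_cases hp : Z.parent x = Z.root
                    · simp [hx1, hx4, hx5, hxN, hx6, hx7, hx7r, hp]
                    · have hpMZ2 : Z.parent x ≠ MZ2 := fun h =>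
                        hMZ2Zer (h ▸ Finset.mem_erase.2 ⟨hp, hpxZ⟩)
                      simp [hx1, hx4, hx5, hxN, hx6, hx7, hx7r, hp, hpMZ2]
                · simp [hx1, hx4, hx5, hxN, hx6, hx7]
  · -- Case 1 : the two blocks are distinct
    have hccne : C' ≠ C := fun h => hs'C (h ▸ hs'C')
    set MZ := q.comp C' s' Z.root with hMZ
    have hsMZ : q.supp MZ = (q.supp C').erase s' ∪ q.supp Z.root := q.supp_comp C' s' Z.root hs'C'
    have hrZMZ : rZ ∈ q.supp MZ := by rw [hsMZ]; exact Finset.mem_union_right _ hrZ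
    have hMZX : MZ ∉ X.supp := notMem_of_witness q hrZMZ hrZnX
    have hMZY : MZ ∉ Y.supp := notMem_of_witness q hrZMZ hrZnY
    have hMZZer : MZ ∉ Z.supp.erase Z.root := by
      intro h
      obtain ⟨h1, h2⟩ := Finset.mem_erase.1 h
      exact hne' MZ MZ ⟨rZ, hrZMZ, fun hcon =>
        Finset.disjoint_left.1 (hZ.2 Z.root hZ.1.1 MZ h2 (fun hh => h1 hh.symm)) hrZ hcon⟩ rfl
    have hMYMZ : MY ≠ MZ := hne' MY MZ ⟨rY, hrYMY, by
      rw [hsMZ]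
      intro h
      rcases Finset.mem_union.1 h with h | h
      · exact hrYnX (supp_sub q hC'X (Finset.mem_of_mem_erase h))
      · exact hrYnZ (supp_sub q hZ.1.1 h)⟩
    have hMYC' : MY ≠ C' := hne' MY C' ⟨rY, hrYMY, fun h => hrYnX (supp_sub q hC'X h)⟩
    have hMZC : MZ ≠ C := hne' MZ C ⟨rZ, hrZMZ, fun h => hrZnX (supp_sub q hCX h)⟩
    have hMYC : MY ≠ C := fun h => hMYX (h.symm ▸ hCX)
    have hccs : C ≠ C' := fun h => hccne h.symm
    have hCY : C ∉ Y.supp := fun h => vXY C hCX C h rfl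
    have hCZ : C ∉ Z.supp := fun h => vXZ C hCX C h rfl
    have hC'Y : C' ∉ Y.supp := fun h => vXY C' hC'X C' h rfl
    have hC'Z : C' ∉ Z.supp := fun h => vXZ C' hC'X C' h rfl
    have hCMZ : C ≠ MZ := fun h => hMZC h.symm
    have hC'MY : C' ≠ MY := fun h => hMYC' h.symm
    have hCMY : C ≠ MY := fun h => hMYC h.symm
    have hMZsC : MZ ≠ C' := fun h => hMZX (h.symm ▸ hC'X)
    have hMZMY : MZ ≠ MY := fun h => hMYMZ h.symm
    have hC'MZ : C' ≠ MZ := fun h => hMZsC h.symm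
    -- blockOf on the composite
    have hb2 : blockOf q (⟨X.supp.erase C ∪ insert MY (Y.supp.erase Y.root),
        if X.root = C then MY else X.root, LTree.bp X Y C MY⟩ : LTree Q) s' = C' := by
      refine blockOf_eq q ?_ ?_ hs'C'
      · exact PDS
      · exact Finset.mem_union_left _ (Finset.mem_erase.2 ⟨hccne, hC'X⟩)
    rw [NAPofQ.box_eq q hZ.1.2.1 hb2]
    -- the right-hand side
    have hsMZsub : q.supp MZ ⊆ q.supp C' ∪ q.supp Z.root := by
      rw [hsMZ]; exact Finset.union_subset_union (Finset.erase_subset s' _) le_rfl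
    have PDS' : ∀ a ∈ X.supp.erase C' ∪ insert MZ (Z.supp.erase Z.root),
        ∀ b ∈ X.supp.erase C' ∪ insert MZ (Z.supp.erase Z.root),
          a ≠ b → Disjoint (q.supp a) (q.supp b) :=
      NAPofQ.PD_box q hX.2 hZ.2 hXZ hC'X hZ.1.1 hsMZsub
    rw [NAPofQ.box_eq q hZ.1.2.1 hC'.symm]
    have hb2' : blockOf q (⟨X.supp.erase C' ∪ insert MZ (Z.supp.erase Z.root),
        if X.root = C' then MZ else X.root, LTree.bp X Z C' MZ⟩ : LTree Q) s = C := by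
      refine blockOf_eq q ?_ ?_ hsC
      · exact PDS'
      · exact Finset.mem_union_left _ (Finset.mem_erase.2 ⟨fun h => hccne h.symm, hCX⟩)
    rw [NAPofQ.box_eq q hY.1.2.1 hb2']
    apply LTree.tree_ext
    · -- supports
      show (X.supp.erase C ∪ insert MY (Y.supp.erase Y.root)).erase C'
          ∪ insert MZ (Z.supp.erase Z.root)
        = (X.supp.erase C' ∪ insert MZ (Z.supp.erase Z.root)).erase C
          ∪ insert MY (Y.supp.erase Y.root)
      ext x
      simp only [Finset.mem_union, Finset.mem_insert, Finset.mem_erase]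
      constructor
      · rintro (⟨h1, (⟨h2, h3⟩ | h4 | ⟨h5, h6⟩)⟩ | h | ⟨h7, h8⟩)
        · exact Or.inl ⟨h2, Or.inl ⟨h1, h3⟩⟩
        · exact Or.inr (Or.inl h4)
        · exact Or.inr (Or.inr ⟨h5, h6⟩)
        · exact Or.inl ⟨fun hh => hMZC (h.symm.trans hh), Or.inr (Or.inl h)⟩
        · exact Or.inl ⟨fun hh => vXZ C hCX x h8 hh.symm, Or.inr (Or.inr ⟨h7, h8⟩)⟩
      · rintro (⟨h1, (⟨h2, h3⟩ | h4 | ⟨h5, h6⟩)⟩ | h | ⟨h7, h8⟩)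
        · exact Or.inl ⟨h2, Or.inl ⟨h1, h3⟩⟩
        · exact Or.inr (Or.inl h4)
        · exact Or.inr (Or.inr ⟨h5, h6⟩)
        · exact Or.inl ⟨fun hh => hMYC' (h.symm.trans hh), Or.inr (Or.inl h)⟩
        · exact Or.inl ⟨fun hh => vXY C' hC'X x h8 hh.symm, Or.inr (Or.inr ⟨h7, h8⟩)⟩
    · -- roots
      show (if (if X.root = C then MY else X.root) = C' then MZ
            else (if X.root = C then MY else X.root))
        = (if (if X.root = C' then MZ else X.root) = C then MY
            else (if X.root = C' then MZ else X.root))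
      by_cases h1 : X.root = C
      · have h2 : X.root ≠ C' := fun h => hccne (h.symm.trans h1)
        rw [if_pos h1, if_neg hMYC', if_neg h2, if_pos h1]
      · by_cases h2 : X.root = C'
        · rw [if_neg h1, if_pos h2, if_neg hMZC]
        · rw [if_neg h1, if_neg h2, if_neg h1]
    · -- parents
      intro x
      show LTree.bp (⟨X.supp.erase C ∪ insert MY (Y.supp.erase Y.root),
          if X.root = C then MY else X.root, LTree.bp X Y C MY⟩ : LTree Q) Z C' MZ x
        = LTree.bp (⟨X.supp.erase C' ∪ insert MZ (Z.supp.erase Z.root),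
          if X.root = C' then MZ else X.root, LTree.bp X Z C' MZ⟩ : LTree Q) Y C MY x
      simp only [LTree.bp, Finset.mem_union, Finset.mem_insert, Finset.mem_erase]
      by_cases hx1 : x ∈ X.supp
      · have hxY : x ∉ Y.supp := fun h => vXY x hx1 x h rfl
        have hxZ : x ∉ Z.supp := fun h => vXZ x hx1 x h rfl
        have hxMY : x ≠ MY := fun h => hMYX (h ▸ hx1)
        have hxMZ : x ≠ MZ := fun h => hMZX (h ▸ hx1)
        by_cases hx2 : x = C
        · subst hx2
          simp [hxY, hxZ, hxMY, hxMZ, hCX, hC'X, hccne, hccs, hCY, hCZ, hC'Y, hC'Z, hCMZ, hC'MY, hCMY, hC'MZ]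
        · by_cases hx3 : x = C'
          · subst hx3
            simp [hxY, hxZ, hxMY, hxMZ, hCX, hC'X, hccne, hccs, hCY, hCZ, hC'Y, hC'Z, hCMZ, hC'MY, hCMY, hC'MZ]
          · have hpxX : X.parent x ∈ X.supp := pX x hx1
            by_cases hp1 : X.parent x = C
            · have hp2 : X.parent x ≠ C' := fun h => hccne (h ▸ hp1 ▸ rfl)
              simp [hx1, hx2, hx3, hxMY, hxMZ, hxY, hxZ, hp1, hp2, hMYC', hMZC, hccs, hccne]
            · by_cases hp2 : X.parent x = C'
              · simp [hx1, hx2, hx3, hxMY, hxMZ, hxY, hxZ, hp1, hp2, hMYC', hMZC, hccs, hccne]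
              · simp [hx1, hx2, hx3, hxMY, hxMZ, hxY, hxZ, hp1, hp2, hccs, hccne]
      · by_cases hx4 : x = MY
        · subst hx4
          have hpCX : X.parent C ∈ X.supp := pX C hCX
          have hMYnYer : ¬(MY ≠ Y.root ∧ MY ∈ Y.supp) := by
            intro h; exact hMYYer (Finset.mem_erase.2 h)
          by_cases hp1 : X.parent C = C
          · have hp2 : X.parent C ≠ C' := fun h => hccne (h.symm.trans hp1)
            simp [hMYX, hMYZ, hMYC', hMYMZ, hMYnYer, hp1, hp2, hMZC, hMYC, hCX, hC'X, hccne, hccs, hCY, hCZ, hC'Y, hC'Z, hCMZ, hC'MY, hCMY, hC'MZ]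
          · by_cases hp2 : X.parent C = C'
            · simp [hMYX, hMYZ, hMYC', hMYMZ, hMYnYer, hp1, hp2, hMZC, hMYC, hCX, hC'X, hccne, hccs, hCY, hCZ, hC'Y, hC'Z, hCMZ, hC'MY, hCMY, hC'MZ]
            · have hpMY : X.parent C ≠ MY := fun h => hMYX (h ▸ hpCX)
              simp [hMYX, hMYZ, hMYC', hMYMZ, hMYnYer, hp1, hp2, hMYC, hpMY, hCX, hC'X, hccne, hccs, hCY, hCZ, hC'Y, hC'Z, hCMZ, hC'MY, hCMY, hC'MZ]
        · by_cases hx5 : x = MZ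
          · subst hx5
            have hpC'X : X.parent C' ∈ X.supp := pX C' hC'X
            have hMZnZer : ¬(MZ ≠ Z.root ∧ MZ ∈ Z.supp) := by
              intro h; exact hMZZer (Finset.mem_erase.2 h)
            by_cases hp1 : X.parent C' = C'
            · have hp2 : X.parent C' ≠ C := fun h => hccne (hp1.symm.trans h)
              simp [hMZX, hMZY, hMZC, hMZMY, hMZnZer, hp1, hp2,
                hMYC', hCX, hC'X, hccne, hccs, hCY, hCZ, hC'Y, hC'Z, hCMZ, hC'MY, hCMY, hC'MZ]
            · by_cases hp2 : X.parent C' = C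
              · simp [hMZX, hMZY, hMZC, hMZMY, hMZnZer, hp1, hp2, hMYC',
                  hCX, hC'X, hccne, hccs, hCY, hCZ, hC'Y, hC'Z, hCMZ, hC'MY, hCMY, hC'MZ]
              · have hpMZ : X.parent C' ≠ MZ := fun h => hMZX (h ▸ hpC'X)
                simp [hMZX, hMZY, hMZC, hMZMY, hMZnZer, hp1, hp2,
                  hpMZ, hCX, hC'X, hccne, hccs, hCY, hCZ, hC'Y, hC'Z, hCMZ, hC'MY, hCMY, hC'MZ]
          · by_cases hx6 : x ∈ Y.supp.erase Y.root
            · obtain ⟨hx6a, hx6b⟩ := Finset.mem_erase.1 hx6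
              have hxZ : x ∉ Z.supp := fun h => vYZ x hx6b x h rfl
              have hxC' : x ≠ C' := fun h => vXY C' hC'X x hx6b h.symm
              have hxC : x ≠ C := fun h => vXY C hCX x hx6b h.symm
              have hpxY : Y.parent x ∈ Y.supp := pY x hx6b
              have hpxC' : Y.parent x ≠ C' := fun h => vXY C' hC'X _ hpxY h.symm
              have hpxC : Y.parent x ≠ C := fun h => vXY C hCX _ hpxY h.symm
              by_cases hp1 : Y.parent x = Y.root
              · simp [hx1, hx4, hx5, hx6a, hx6b, hxZ, hxC', hxC, hp1, hMYC']
              · simp [hx1, hx4, hx5, hx6a, hx6b, hxZ, hxC', hxC, hp1, hpxC']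
            · by_cases hx7 : x ∈ Z.supp.erase Z.root
              · obtain ⟨hx7a, hx7b⟩ := Finset.mem_erase.1 hx7
                have hxY : x ∉ Y.supp := fun h => vYZ x h x hx7b rfl
                have hxC' : x ≠ C' := fun h => vXZ C' hC'X x hx7b h.symm
                have hxC : x ≠ C := fun h => vXZ C hCX x hx7b h.symm
                have hpxZ : Z.parent x ∈ Z.supp := pZ x hx7b
                have hpxC' : Z.parent x ≠ C' := fun h => vXZ C' hC'X _ hpxZ h.symm
                have hpxC : Z.parent x ≠ C := fun h => vXZ C hCX _ hpxZ h.symm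
                by_cases hp1 : Z.parent x = Z.root
                · simp [hx1, hx4, hx5, hx7a, hx7b, hxY, hxC', hxC, hp1, hMZC]
                · simp [hx1, hx4, hx5, hx7a, hx7b, hxY, hxC', hxC, hp1, hpxC]
              · have hx6' : ¬(x ≠ Y.root ∧ x ∈ Y.supp) := by
                  intro h; exact hx6 (Finset.mem_erase.2 h)
                have hx7' : ¬(x ≠ Z.root ∧ x ∈ Z.supp) := by
                  intro h; exact hx7 (Finset.mem_erase.2 h)
                simp [hx1, hx4, hx5, hx6', hx7']


theorem NAPofQ.pA2 : ∀ (X Y Z : LTree Q), Valid q X → Valid q Y → Valid q Z →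
    Disjoint (tsupp q X) (tsupp q Y) → Disjoint (tsupp q X) (tsupp q Z) →
    Disjoint (tsupp q Y) (tsupp q Z) →
    ∀ s t : V, s ∈ tsupp q X → t ∈ tsupp q Y →
      box q (box q X s Y) t Z = box q X s (box q Y t Z) := by
  intro X Y Z hX hY hZ hXY hXZ hYZ s t hsX htY
  have hne' : ∀ a b : Q, (∃ r, r ∈ q.supp a ∧ r ∉ q.supp b) → a ≠ b := by
    rintro a b ⟨r, hr, hr'⟩ rfl; exact hr' hr
  have pX : ∀ v ∈ X.supp, X.parent v ∈ X.supp := fun v hv => (hX.1.2.2.1 v hv).1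
  have pY : ∀ v ∈ Y.supp, Y.parent v ∈ Y.supp := fun v hv => (hY.1.2.2.1 v hv).1
  have pZ : ∀ v ∈ Z.supp, Z.parent v ∈ Z.supp := fun v hv => (hZ.1.2.2.1 v hv).1
  have vXY : ∀ a ∈ X.supp, ∀ b ∈ Y.supp, a ≠ b := fun a ha b hb => by
    obtain ⟨r, hr⟩ := q.supp_nonempty a
    exact hne' a b ⟨r, hr, fun h => Finset.disjoint_left.1 hXY (supp_sub q ha hr) (supp_sub q hb h)⟩
  have vXZ : ∀ a ∈ X.supp, ∀ b ∈ Z.supp, a ≠ b := fun a ha b hb => by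
    obtain ⟨r, hr⟩ := q.supp_nonempty a
    exact hne' a b ⟨r, hr, fun h => Finset.disjoint_left.1 hXZ (supp_sub q ha hr) (supp_sub q hb h)⟩
  have vYZ : ∀ a ∈ Y.supp, ∀ b ∈ Z.supp, a ≠ b := fun a ha b hb => by
    obtain ⟨r, hr⟩ := q.supp_nonempty a
    exact hne' a b ⟨r, hr, fun h => Finset.disjoint_left.1 hYZ (supp_sub q ha hr) (supp_sub q hb h)⟩
  set C := blockOf q X s with hC
  obtain ⟨hCX, hsC⟩ := blockOf_spec q hsX
  rw [← hC] at hCX hsC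
  set B := blockOf q Y t with hB
  obtain ⟨hBY, htB⟩ := blockOf_spec q htY
  rw [← hB] at hBY htB
  obtain ⟨rY, hrY⟩ := q.supp_nonempty Y.root
  obtain ⟨rZ, hrZ⟩ := q.supp_nonempty Z.root
  have hrYtY : rY ∈ tsupp q Y := supp_sub q hY.1.1 hrY
  have hrZtZ : rZ ∈ tsupp q Z := supp_sub q hZ.1.1 hrZ
  have hrYnX : rY ∉ tsupp q X := Finset.disjoint_right.1 hXY hrYtY
  have hrZnX : rZ ∉ tsupp q X := Finset.disjoint_right.1 hXZ hrZtZ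
  have hrYnZ : rY ∉ tsupp q Z := Finset.disjoint_left.1 hYZ hrYtY
  have hrZnY : rZ ∉ tsupp q Y := Finset.disjoint_right.1 hYZ hrZtZ
  set MY := q.comp C s Y.root with hMY
  have hsMY : q.supp MY = (q.supp C).erase s ∪ q.supp Y.root := q.supp_comp C s Y.root hsC
  have hrYMY : rY ∈ q.supp MY := by rw [hsMY]; exact Finset.mem_union_right _ hrY
  have hrZnMY : rZ ∉ q.supp MY := by
    rw [hsMY]
    intro h
    rcases Finset.mem_union.1 h with h | h
    · exact hrZnX (supp_sub q hCX (Finset.mem_of_mem_erase h))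
    · exact hrZnY (supp_sub q hY.1.1 h)
  have hMYX : MY ∉ X.supp := notMem_of_witness q hrYMY hrYnX
  have hMYZ : MY ∉ Z.supp := notMem_of_witness q hrYMY hrYnZ
  have hMYYer : MY ∉ Y.supp.erase Y.root := by
    intro h
    obtain ⟨h1, h2⟩ := Finset.mem_erase.1 h
    exact hne' MY MY ⟨rY, hrYMY, fun hcon =>
      Finset.disjoint_left.1 (hY.2 Y.root hY.1.1 MY h2 (fun hh => h1 hh.symm)) hrY hcon⟩ rfl
  have hsMYsub : q.supp MY ⊆ q.supp C ∪ q.supp Y.root := by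
    rw [hsMY]; exact Finset.union_subset_union (Finset.erase_subset s _) le_rfl
  have PDS : ∀ a ∈ X.supp.erase C ∪ insert MY (Y.supp.erase Y.root),
      ∀ b ∈ X.supp.erase C ∪ insert MY (Y.supp.erase Y.root),
        a ≠ b → Disjoint (q.supp a) (q.supp b) :=
    NAPofQ.PD_box q hX.2 hY.2 hXY hCX hY.1.1 hsMYsub
  have hCY : C ∉ Y.supp := fun h => vXY C hCX C h rfl
  have hCZ : C ∉ Z.supp := fun h => vXZ C hCX C h rfl
  have hCMY : C ≠ MY := fun h => hMYX (h ▸ hCX)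
  rw [NAPofQ.box_eq q hY.1.2.1 hC.symm]
  by_cases hbr : B = Y.root
  · -- Case 2 : the block of t is the root block of Y
    have htRY : t ∈ q.supp Y.root := hbr ▸ htB
    set K := q.comp Y.root t Z.root with hK
    have hsK : q.supp K = (q.supp Y.root).erase t ∪ q.supp Z.root := q.supp_comp _ t _ htRY
    have hrZK : rZ ∈ q.supp K := by rw [hsK]; exact Finset.mem_union_right _ hrZ
    have hKX : K ∉ X.supp := notMem_of_witness q hrZK hrZnX
    have hKY : K ∉ Y.supp := notMem_of_witness q hrZK hrZnY
    have hKZer : K ∉ Z.supp.erase Z.root := by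
      intro h
      obtain ⟨h1, h2⟩ := Finset.mem_erase.1 h
      exact hne' K K ⟨rZ, hrZK, fun hcon =>
        Finset.disjoint_left.1 (hZ.2 Z.root hZ.1.1 K h2 (fun hh => h1 hh.symm)) hrZ hcon⟩ rfl
    have htMY : t ∈ q.supp MY := by rw [hsMY]; exact Finset.mem_union_right _ htRY
    set N := q.comp MY t Z.root with hN
    have hsN : q.supp N = (q.supp MY).erase t ∪ q.supp Z.root := q.supp_comp MY t Z.root htMY
    have hrZN : rZ ∈ q.supp N := by rw [hsN]; exact Finset.mem_union_right _ hrZ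
    have hNX : N ∉ X.supp := notMem_of_witness q hrZN hrZnX
    have hNY : N ∉ Y.supp := notMem_of_witness q hrZN hrZnY
    have hNZer : N ∉ Z.supp.erase Z.root := by
      intro h
      obtain ⟨h1, h2⟩ := Finset.mem_erase.1 h
      exact hne' N N ⟨rZ, hrZN, fun hcon =>
        Finset.disjoint_left.1 (hZ.2 Z.root hZ.1.1 N h2 (fun hh => h1 hh.symm)) hrZ hcon⟩ rfl
    have hNMY : N ≠ MY := hne' N MY ⟨rZ, hrZN, hrZnMY⟩
    have hMYN : MY ≠ N := fun h => hNMY h.symm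
    have hKMY : K ≠ MY := hne' K MY ⟨rZ, hrZK, hrZnMY⟩
    have hMYK : MY ≠ K := fun h => hKMY h.symm
    have hCN : C ≠ N := fun h => hNX (h ▸ hCX)
    have hCK : C ≠ K := fun h => hKX (h ▸ hCX)
    have hbMY : blockOf q (⟨X.supp.erase C ∪ insert MY (Y.supp.erase Y.root),
        if X.root = C then MY else X.root, LTree.bp X Y C MY⟩ : LTree Q) t = MY := by
      refine blockOf_eq q ?_ ?_ htMY
      · exact PDS
      · exact Finset.mem_union_right _ (Finset.mem_insert_self _ _)
    rw [NAPofQ.box_eq q hZ.1.2.1 hbMY]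
    have hbRY : blockOf q Y t = Y.root := hB.symm.trans hbr
    rw [NAPofQ.box_eq q hZ.1.2.1 hbRY, if_pos rfl]
    have hrootW : (⟨Y.supp.erase Y.root ∪ insert K (Z.supp.erase Z.root), K,
        LTree.bp Y Z Y.root K⟩ : LTree Q).parent (⟨Y.supp.erase Y.root ∪
        insert K (Z.supp.erase Z.root), K, LTree.bp Y Z Y.root K⟩ : LTree Q).root
        = (⟨Y.supp.erase Y.root ∪ insert K (Z.supp.erase Z.root), K,
        LTree.bp Y Z Y.root K⟩ : LTree Q).root := by
      show LTree.bp Y Z Y.root K K = K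
      have h1 : K ∉ Y.supp.erase Y.root := fun h => hKY (Finset.mem_of_mem_erase h)
      rw [LTree.bp, if_neg h1, if_pos rfl, hY.1.2.1, if_pos rfl]
    rw [NAPofQ.box_eq q hrootW hC.symm]
    have dCY : Disjoint (q.supp C) (q.supp Y.root) :=
      Finset.disjoint_of_subset_left (supp_sub q hCX)
        (Finset.disjoint_of_subset_right (supp_sub q hY.1.1) hXY)
    have dCZ : Disjoint (q.supp C) (q.supp Z.root) :=
      Finset.disjoint_of_subset_left (supp_sub q hCX)
        (Finset.disjoint_of_subset_right (supp_sub q hZ.1.1) hXZ)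
    have dYZ' : Disjoint (q.supp Y.root) (q.supp Z.root) :=
      Finset.disjoint_of_subset_left (supp_sub q hY.1.1)
        (Finset.disjoint_of_subset_right (supp_sub q hZ.1.1) hYZ)
    have hNK : q.comp C s (⟨Y.supp.erase Y.root ∪ insert K (Z.supp.erase Z.root), K,
        LTree.bp Y Z Y.root K⟩ : LTree Q).root = N := by
      show q.comp C s K = N
      exact (q.nested C Y.root Z.root s t hsC htRY dCY dCZ dYZ').symm
    rw [hNK]
    apply LTree.tree_ext
    · show (X.supp.erase C ∪ insert MY (Y.supp.erase Y.root)).erase MY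
          ∪ insert N (Z.supp.erase Z.root)
        = X.supp.erase C ∪ insert N
            ((Y.supp.erase Y.root ∪ insert K (Z.supp.erase Z.root)).erase K)
      ext x
      simp only [Finset.mem_union, Finset.mem_insert, Finset.mem_erase]
      constructor
      · rintro (⟨h0, (⟨h1, h2⟩ | h | ⟨h3, h4⟩)⟩ | h | ⟨h5, h6⟩)
        · exact Or.inl ⟨h1, h2⟩
        · exact absurd h h0
        · exact Or.inr (Or.inr ⟨fun hh => hKY (hh ▸ h4), Or.inl ⟨h3, h4⟩⟩)
        · exact Or.inr (Or.inl h)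
        · exact Or.inr (Or.inr ⟨fun hh => hKZer (hh ▸ Finset.mem_erase.2 ⟨h5, h6⟩),
            Or.inr (Or.inr ⟨h5, h6⟩)⟩)
      · rintro (⟨h1, h2⟩ | h | ⟨h0, (⟨h3, h4⟩ | h | ⟨h5, h6⟩)⟩)
        · exact Or.inl ⟨fun hh => hMYX (hh ▸ h2), Or.inl ⟨h1, h2⟩⟩
        · exact Or.inr (Or.inl h)
        · exact Or.inl ⟨fun hh => hMYYer (hh ▸ Finset.mem_erase.2 ⟨h3, h4⟩),
            Or.inr (Or.inr ⟨h3, h4⟩)⟩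
        · exact absurd h h0
        · exact Or.inr (Or.inr ⟨h5, h6⟩)
    · show (if (if X.root = C then MY else X.root) = MY then N
            else (if X.root = C then MY else X.root))
        = (if X.root = C then N else X.root)
      by_cases h1 : X.root = C
      · rw [if_pos h1, if_pos rfl, if_pos h1]
      · have e1 : X.root ≠ MY := fun h => hMYX (h ▸ hX.1.1)
        rw [if_neg h1, if_neg e1, if_neg h1]
    · intro x
      show LTree.bp (⟨X.supp.erase C ∪ insert MY (Y.supp.erase Y.root),
          if X.root = C then MY else X.root, LTree.bp X Y C MY⟩ : LTree Q) Z MY N x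
        = LTree.bp X (⟨Y.supp.erase Y.root ∪ insert K (Z.supp.erase Z.root), K,
          LTree.bp Y Z Y.root K⟩ : LTree Q) C N x
      simp only [LTree.bp, Finset.mem_union, Finset.mem_insert, Finset.mem_erase]
      by_cases hx1 : x ∈ X.supp
      · have hxY : x ∉ Y.supp := fun h => vXY x hx1 x h rfl
        have hxZ : x ∉ Z.supp := fun h => vXZ x hx1 x h rfl
        have hxMY : x ≠ MY := fun h => hMYX (h ▸ hx1)
        have hxN : x ≠ N := fun h => hNX (h ▸ hx1)
        have hxK : x ≠ K := fun h => hKX (h ▸ hx1)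
        by_cases hx2 : x = C
        · subst hx2
          simp [hxY, hxZ, hxMY, hxN, hxK]
        · have hpxX : X.parent x ∈ X.supp := pX x hx1
          have hpMY : X.parent x ≠ MY := fun h => hMYX (h ▸ hpxX)
          by_cases hp : X.parent x = C
          · simp [hx1, hx2, hxMY, hxN, hxK, hxY, hxZ, hp]
          · simp [hx1, hx2, hxMY, hxN, hxK, hxY, hxZ, hp, hpMY]
      · by_cases hx4 : x = MY
        · subst hx4
          have hMYnYer : ¬(MY ≠ Y.root ∧ MY ∈ Y.supp) := fun h => hMYYer (Finset.mem_erase.2 h)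
          simp [hMYX, hMYZ, hMYN, hMYK, hMYnYer, hCMY]
        · by_cases hxN : x = N
          · subst hxN
            have hpCX : X.parent C ∈ X.supp := pX C hCX
            have hpCMY : X.parent C ≠ MY := fun h => hMYX (h ▸ hpCX)
            have hNnYer : ¬(N ≠ Y.root ∧ N ∈ Y.supp) := fun h => hNY h.2
            have hNnZer : ¬(N ≠ Z.root ∧ N ∈ Z.supp) := fun h => hNZer (Finset.mem_erase.2 h)
            have hNK' : N ≠ K ∨ True := Or.inr trivial
            by_cases hp : X.parent C = C
            · simp [hNX, hNY, hNMY, hNnZer, hNnYer, hCN, hp, hMYX, hCMY]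
            · simp [hNX, hNY, hNMY, hNnZer, hNnYer, hCN, hp, hpCMY, hMYX, hCMY]
          · by_cases hx6 : x ∈ Y.supp
            · have hxX : x ∉ X.supp := hx1
              have hxZ : x ∉ Z.supp := fun h => vYZ x hx6 x h rfl
              have hxK : x ≠ K := fun h => hKY (h ▸ hx6)
              have hxN' : x ≠ N := fun h => hNY (h ▸ hx6)
              by_cases hx6r : x = Y.root
              · subst hx6r
                simp [hx1, hx4, hxN', hxK, hxZ]
              · have hpxY : Y.parent x ∈ Y.supp := pY x hx6
                by_cases hp : Y.parent x = Y.root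
                · simp [hx1, hx4, hxN', hxK, hxZ, hx6, hx6r, hp]
                · have hpMY : Y.parent x ≠ MY := fun h =>
                    hMYYer (h ▸ Finset.mem_erase.2 ⟨hp, hpxY⟩)
                  have hpK : Y.parent x ≠ K := fun h => hKY (h ▸ hpxY)
                  simp [hx1, hx4, hxN', hxK, hxZ, hx6, hx6r, hp, hpMY, hpK]
            · by_cases hx7 : x ∈ Z.supp
              · have hxMY' : x ≠ MY := hx4
                by_cases hx7r : x = Z.root
                · subst hx7r
                  have e1 : Z.root ∉ X.supp := fun h => vXZ Z.root h Z.root hx7 rfl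
                  simp [e1, hx6, hx4, hxN]
                · have hpxZ : Z.parent x ∈ Z.supp := pZ x hx7
                  have hxK : x ≠ K := fun h => hKZer (h ▸ Finset.mem_erase.2 ⟨hx7r, hx7⟩)
                  by_cases hp : Z.parent x = Z.root
                  · simp [hx1, hx4, hxN, hx6, hx7, hx7r, hp, hxK]
                  · have hpK : Z.parent x ≠ K := fun h =>
                      hKZer (h ▸ Finset.mem_erase.2 ⟨hp, hpxZ⟩)
                    simp [hx1, hx4, hxN, hx6, hx7, hx7r, hp, hxK, hpK]
              · simp [hx1, hx4, hxN, hx6, hx7]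
  · -- Case 1 : the block of t is not the root block of Y
    set MZ := q.comp B t Z.root with hMZ
    have hsMZ : q.supp MZ = (q.supp B).erase t ∪ q.supp Z.root := q.supp_comp B t Z.root htB
    have hrZMZ : rZ ∈ q.supp MZ := by rw [hsMZ]; exact Finset.mem_union_right _ hrZ
    have hMZX : MZ ∉ X.supp := notMem_of_witness q hrZMZ hrZnX
    have hMZY : MZ ∉ Y.supp := notMem_of_witness q hrZMZ hrZnY
    have hMZZer : MZ ∉ Z.supp.erase Z.root := by
      intro h
      obtain ⟨h1, h2⟩ := Finset.mem_erase.1 h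
      exact hne' MZ MZ ⟨rZ, hrZMZ, fun hcon =>
        Finset.disjoint_left.1 (hZ.2 Z.root hZ.1.1 MZ h2 (fun hh => h1 hh.symm)) hrZ hcon⟩ rfl
    have hrYnMZ : rY ∉ q.supp MZ := by
      rw [hsMZ]
      intro h
      rcases Finset.mem_union.1 h with h | h
      · exact Finset.disjoint_left.1
          (hY.2 Y.root hY.1.1 B hBY (fun hh => hbr hh.symm)) hrY (Finset.mem_of_mem_erase h)
      · exact hrYnZ (supp_sub q hZ.1.1 h)
    have hMYMZ : MY ≠ MZ := hne' MY MZ ⟨rY, hrYMY, hrYnMZ⟩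
    have hMZMY : MZ ≠ MY := fun h => hMYMZ h.symm
    have hMYB : MY ≠ B := fun h => hMYYer (h ▸ Finset.mem_erase.2 ⟨hbr, hBY⟩)
    have hBMY : B ≠ MY := fun h => hMYB h.symm
    have hBX : B ∉ X.supp := fun h => vXY B h B hBY rfl
    have hBZ : B ∉ Z.supp := fun h => vYZ B hBY B h rfl
    have hCB : C ≠ B := vXY C hCX B hBY
    have hCMZ : C ≠ MZ := fun h => hMZX (h ▸ hCX)
    have hpB : Y.parent B ≠ B := fun h => hbr (parent_fix hY.1 hBY h)
    have hRYB : Y.root ≠ B := fun h => hbr h.symm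
    have hMZRY : MZ ≠ Y.root := fun h => hMZY (h ▸ hY.1.1)
    have hbB : blockOf q (⟨X.supp.erase C ∪ insert MY (Y.supp.erase Y.root),
        if X.root = C then MY else X.root, LTree.bp X Y C MY⟩ : LTree Q) t = B := by
      refine blockOf_eq q ?_ ?_ htB
      · exact PDS
      · exact Finset.mem_union_right _
          (Finset.mem_insert_of_mem (Finset.mem_erase.2 ⟨hbr, hBY⟩))
    rw [NAPofQ.box_eq q hZ.1.2.1 hbB]
    rw [NAPofQ.box_eq q hZ.1.2.1 hB.symm]
    have hWr : (if Y.root = B then MZ else Y.root) = Y.root := if_neg (fun h => hbr h.symm)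
    rw [hWr]
    have hrootW : (⟨Y.supp.erase B ∪ insert MZ (Z.supp.erase Z.root), Y.root,
        LTree.bp Y Z B MZ⟩ : LTree Q).parent (⟨Y.supp.erase B ∪
        insert MZ (Z.supp.erase Z.root), Y.root, LTree.bp Y Z B MZ⟩ : LTree Q).root
        = (⟨Y.supp.erase B ∪ insert MZ (Z.supp.erase Z.root), Y.root,
        LTree.bp Y Z B MZ⟩ : LTree Q).root := by
      show LTree.bp Y Z B MZ Y.root = Y.root
      have h1 : Y.root ∈ Y.supp.erase B := Finset.mem_erase.2 ⟨fun h => hbr h.symm, hY.1.1⟩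
      have h2 : Y.parent Y.root ≠ B := fun h => hbr (by rw [← hY.1.2.1, h])
      rw [LTree.bp, if_pos h1, if_neg h2, hY.1.2.1]
    rw [NAPofQ.box_eq q hrootW hC.symm]
    apply LTree.tree_ext
    · show (X.supp.erase C ∪ insert MY (Y.supp.erase Y.root)).erase B
          ∪ insert MZ (Z.supp.erase Z.root)
        = X.supp.erase C ∪ insert MY
            ((Y.supp.erase B ∪ insert MZ (Z.supp.erase Z.root)).erase Y.root)
      ext x
      simp only [Finset.mem_union, Finset.mem_insert, Finset.mem_erase]
      constructor
      · rintro (⟨h0, (⟨h1, h2⟩ | h | ⟨h3, h4⟩)⟩ | h | ⟨h5, h6⟩)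
        · exact Or.inl ⟨h1, h2⟩
        · exact Or.inr (Or.inl h)
        · exact Or.inr (Or.inr ⟨h3, Or.inl ⟨h0, h4⟩⟩)
        · exact Or.inr (Or.inr ⟨fun hh => hMZY (show MZ ∈ Y.supp from
            (h.symm.trans hh).symm ▸ hY.1.1), Or.inr (Or.inl h)⟩)
        · exact Or.inr (Or.inr ⟨fun hh => vYZ Y.root hY.1.1 x h6 hh.symm,
            Or.inr (Or.inr ⟨h5, h6⟩)⟩)
      · rintro (⟨h1, h2⟩ | h | ⟨h0, (⟨h3, h4⟩ | h | ⟨h5, h6⟩)⟩)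
        · exact Or.inl ⟨fun hh => hBX (hh ▸ h2), Or.inl ⟨h1, h2⟩⟩
        · exact Or.inl ⟨fun hh => hBMY (hh.symm.trans h), Or.inr (Or.inl h)⟩
        · exact Or.inl ⟨h3, Or.inr (Or.inr ⟨h0, h4⟩)⟩
        · exact Or.inr (Or.inl h)
        · exact Or.inr (Or.inr ⟨h5, h6⟩)
    · show (if (if X.root = C then MY else X.root) = B then MZ
            else (if X.root = C then MY else X.root))
        = (if X.root = C then MY else X.root)
      by_cases h1 : X.root = C
      · rw [if_pos h1, if_neg hMYB]
      · have e1 : X.root ≠ B := fun h => hBX (h ▸ hX.1.1)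
        rw [if_neg h1, if_neg e1]
    · intro x
      show LTree.bp (⟨X.supp.erase C ∪ insert MY (Y.supp.erase Y.root),
          if X.root = C then MY else X.root, LTree.bp X Y C MY⟩ : LTree Q) Z B MZ x
        = LTree.bp X (⟨Y.supp.erase B ∪ insert MZ (Z.supp.erase Z.root), Y.root,
          LTree.bp Y Z B MZ⟩ : LTree Q) C MY x
      simp only [LTree.bp, Finset.mem_union, Finset.mem_insert, Finset.mem_erase]
      by_cases hx1 : x ∈ X.supp
      · have hxY : x ∉ Y.supp := fun h => vXY x hx1 x h rfl
        have hxZ : x ∉ Z.supp := fun h => vXZ x hx1 x h rfl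
        have hxMY : x ≠ MY := fun h => hMYX (h ▸ hx1)
        have hxMZ : x ≠ MZ := fun h => hMZX (h ▸ hx1)
        have hxB : x ≠ B := fun h => hBX (h ▸ hx1)
        have hxRY : x ≠ Y.root := fun h => hxY (h ▸ hY.1.1)
        by_cases hx2 : x = C
        · subst hx2
          simp [hxY, hxZ, hxMY, hxMZ, hxB, hxRY]
        · have hpxX : X.parent x ∈ X.supp := pX x hx1
          have hpMYx : X.parent x ≠ B := fun h => hBX (h ▸ hpxX)
          by_cases hp : X.parent x = C
          · simp [hx1, hx2, hxMY, hxMZ, hxB, hxY, hxZ, hxRY, hp, hMYB]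
          · simp [hx1, hx2, hxMY, hxMZ, hxB, hxY, hxZ, hxRY, hp, hpMYx]
      · by_cases hx4 : x = MY
        · subst hx4
          have hMYnYer : ¬(MY ≠ Y.root ∧ MY ∈ Y.supp) := fun h => hMYYer (Finset.mem_erase.2 h)
          have hpCX : X.parent C ∈ X.supp := pX C hCX
          have hpCB : X.parent C ≠ B := fun h => hBX (h ▸ hpCX)
          by_cases hp : X.parent C = C
          · simp [hMYX, hMYZ, hMYB, hMYMZ, hMYnYer, hCMY, hp, hMYB]
          · have hpCMY : X.parent C ≠ MY := fun h => hMYX (h ▸ hpCX)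
            simp [hMYX, hMYZ, hMYB, hMYMZ, hMYnYer, hCMY, hp, hpCB, hpCMY]
        · by_cases hx5 : x = MZ
          · subst hx5
            have hMZnZer : ¬(MZ ≠ Z.root ∧ MZ ∈ Z.supp) := fun h => hMZZer (Finset.mem_erase.2 h)
            have hpBY : Y.parent B ∈ Y.supp := pY B hBY
            have hpBMZ : Y.parent B ≠ MZ := fun h => hMZY (h ▸ hpBY)
            by_cases hp : Y.parent B = Y.root
            · simp [hMZX, hMZY, hMZMY, hMZnZer, hMZRY, hCMZ, hBX, hBMY, hCB, hbr, hBY,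
                hp, hpB, hMYB, hRYB]
            · simp [hMZX, hMZY, hMZMY, hMZnZer, hMZRY, hCMZ, hBX, hBMY, hCB, hbr, hBY,
                hp, hpB, hpBMZ, hRYB]
          · by_cases hx6 : x ∈ Y.supp
            · have hxX : x ∉ X.supp := hx1
              have hxZ : x ∉ Z.supp := fun h => vYZ x hx6 x h rfl
              have hxMZ : x ≠ MZ := fun h => hMZY (h ▸ hx6)
              by_cases hx6b : x = B
              · subst hx6b
                simp [hx1, hx4, hxMZ, hxZ, hBX, hBMY, hBZ, hbr, hRYB]
              · by_cases hx6r : x = Y.root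
                · subst hx6r
                  simp [hx1, hx4, hxMZ, hxZ, hRYB, hbr, hMYB]
                · have hpxY : Y.parent x ∈ Y.supp := pY x hx6
                  have hpxMZ : Y.parent x ≠ MZ := fun h => hMZY (h ▸ hpxY)
                  by_cases hp1 : Y.parent x = B
                  · have hp2 : Y.parent x ≠ Y.root := fun h => hbr (hp1.symm.trans h)
                    simp [hx1, hx4, hx6b, hx6r, hxMZ, hxZ, hx6, hp1, hp2, hMZMY, hMZRY,
                      hbr, hRYB]
                  · by_cases hp2 : Y.parent x = Y.root
                    · simp [hx1, hx4, hx6b, hx6r, hxMZ, hxZ, hx6, hp1, hp2, hMYB, hbr, hRYB]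
                    · have hpxC : Y.parent x ≠ C := fun h => vXY C hCX _ hpxY h.symm
                      simp [hx1, hx4, hx6b, hx6r, hxMZ, hxZ, hx6, hp1, hp2, hpxMZ, hpxC]
            · by_cases hx7 : x ∈ Z.supp
              · have hxRY : x ≠ Y.root := fun h => vYZ Y.root hY.1.1 x hx7 h.symm
                by_cases hx7r : x = Z.root
                · subst hx7r
                  have e1 : Z.root ∉ X.supp := fun h => vXZ Z.root h Z.root hx7 rfl
                  simp [e1, hx6, hx4, hx5, hxRY]
                · have hpxZ : Z.parent x ∈ Z.supp := pZ x hx7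
                  have hpxRY : Z.parent x ≠ Y.root := fun h =>
                    vYZ Y.root hY.1.1 _ hpxZ h.symm
                  by_cases hp : Z.parent x = Z.root
                  · simp [hx1, hx4, hx5, hx6, hx7, hx7r, hxRY, hp, hMZRY]
                  · simp [hx1, hx4, hx5, hx6, hx7, hx7r, hxRY, hp, hpxRY]
              · simp [hx1, hx4, hx5, hx6, hx7]

end NAPassoc

open NAPofQ in
/-- Let `q` be a positive symmetric operad.  The partial compositions `□ₛ` make the
composite species `NAP ∘ q` a symmetric operad: parallel associativity, nested
associativity, naturality and unitality hold. -/
theorem NAPofQ_is_operad {V Q : Type} [DecidableEq V] [DecidableEq Q]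
    (q : POperad V Q) :
    -- (A1) parallel associativity
    (∀ (X Y Z : LTree Q), Valid q X → Valid q Y → Valid q Z →
      Disjoint (tsupp q X) (tsupp q Y) → Disjoint (tsupp q X) (tsupp q Z) →
      Disjoint (tsupp q Y) (tsupp q Z) →
      ∀ s s' : V, s ∈ tsupp q X → s' ∈ tsupp q X → s ≠ s' →
        box q (box q X s Y) s' Z = box q (box q X s' Z) s Y) ∧
    -- (A2) nested associativity
    (∀ (X Y Z : LTree Q), Valid q X → Valid q Y → Valid q Z →
      Disjoint (tsupp q X) (tsupp q Y) → Disjoint (tsupp q X) (tsupp q Z) →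
      Disjoint (tsupp q Y) (tsupp q Z) →
      ∀ s t : V, s ∈ tsupp q X → t ∈ tsupp q Y →
        box q (box q X s Y) t Z = box q X s (box q Y t Z)) ∧
    -- (N1) naturality of the partial compositions
    (∀ (X Y : LTree Q), Valid q X → Valid q Y →
      Disjoint (tsupp q X) (tsupp q Y) →
      ∀ s : V, s ∈ tsupp q X → ∀ e : V ≃ V,
        LTree.mapV (q.relabel e) (box q X s Y) =
          box q (LTree.mapV (q.relabel e) X) (e s) (LTree.mapV (q.relabel e) Y)) ∧
    -- (N2) naturality of the units
    (∀ (a : V) (e : V ≃ V), LTree.mapV (q.relabel e) (unitT q a) = unitT q (e a)) ∧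
    -- (U1) left unitality
    (∀ (a : V) (Y : LTree Q), Valid q Y → a ∉ tsupp q Y →
      box q (unitT q a) a Y = Y) ∧
    -- (U2) right unitality
    (∀ (X : LTree Q) (s : V), Valid q X → s ∈ tsupp q X →
      box q X s (unitT q s) = X) := by
  exact ⟨NAPofQ.pA1 q, NAPofQ.pA2 q, NAPofQ.pN1 q, NAPofQ.pN2 q, NAPofQ.pU1 q, NAPofQ.pU2 q⟩
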